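/- arXiv:2210.10504 — 7 statements merged into one kernel-verified Lean document; each statement's English description precedes it below -/
import Mathlib

section
/- Let v_1,…,v_m be linearly independent vectors of R^n with 0 ≤ m < n, and let δ > 0. Then there exists T ∈ GL_n(Z) (a linear automorphism of R^n mapping Z^n onto itself) such that dist(T(e_j), v_j) ≤ δ for each j = 1,…,m, where (e_1,…,e_n) is the standard basis. -/
open scoped BigOperators
open scoped Matrix

noncomputable def projDist {n : ℕ} (x y : EuclideanSpace ℝ (Fin n)) : ℝ :=
  Real.sqrt (‖x‖^2 * ‖y‖^2 - (inner ℝ x y : ℝ)^2) / (‖x‖ * ‖y‖)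

noncomputable def distToSub {n : ℕ} (x : EuclideanSpace ℝ (Fin n))
    (V : Submodule ℝ (EuclideanSpace ℝ (Fin n))) : ℝ :=
  ‖(Submodule.orthogonalProjectionOnto Vᗮ x : EuclideanSpace ℝ (Fin n))‖ / ‖x‖

noncomputable def subDist {n : ℕ} (W V : Submodule ℝ (EuclideanSpace ℝ (Fin n))) : ℝ :=
  sSup {d : ℝ | ∃ x ∈ W, x ≠ 0 ∧ d = distToSub x V}

noncomputable def gramVol {n : ℕ} {ι : Type*} [Fintype ι] [DecidableEq ι]
    (v : ι → EuclideanSpace ℝ (Fin n)) : ℝ :=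
  Real.sqrt (Matrix.det (Matrix.of fun i j => (inner ℝ (v i) (v j) : ℝ)))

noncomputable def Theta {n : ℕ} {ι : Type*} [Fintype ι] [DecidableEq ι]
    (v : ι → EuclideanSpace ℝ (Fin n)) : ℝ :=
  gramVol v / ∏ i, ‖v i‖

def IsIntPt {n : ℕ} (x : EuclideanSpace ℝ (Fin n)) : Prop := ∀ i, ∃ k : ℤ, x i = (k : ℝ)

noncomputable def toE {n : ℕ} (x : Fin n → ℤ) : EuclideanSpace ℝ (Fin n) :=
  (WithLp.equiv 2 (Fin n → ℝ)).symm (fun i => (x i : ℝ))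

-- step 1: projDist inequality
lemma projDist_le {n : ℕ} (x y : EuclideanSpace ℝ (Fin n)) (t : ℝ) (ht : 0 < t)
    (hy : y ≠ 0) : projDist x y ≤ ‖x - t • y‖ / (t * ‖y‖) := by
  have hyn : (0:ℝ) < ‖y‖ := norm_pos_iff.mpr hy
  by_cases hx : x = 0
  · subst hx
    have : projDist 0 y = 0 := by
      simp [projDist, inner_zero_left]
    rw [this]
    positivity
  have hxn : (0:ℝ) < ‖x‖ := norm_pos_iff.mpr hx
  set c : ℝ := (inner ℝ x y : ℝ) with hc
  set N : ℝ := ‖x - t • y‖ with hN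
  have hNn : 0 ≤ N := norm_nonneg _
  have hexp : N ^ 2 = ‖x‖^2 - 2 * (t * c) + t^2 * ‖y‖^2 := by
    rw [hN, norm_sub_sq_real, real_inner_smul_right, norm_smul, Real.norm_eq_abs,
      abs_of_pos ht, mul_pow, ← hc]
  have key : ‖x‖^2 * ‖y‖^2 - c^2 ≤ (‖x‖ * N / t)^2 := by
    rw [div_pow, le_div_iff₀ (by positivity)]
    nlinarith [sq_nonneg (‖x‖^2 - t * c)]
  have h1 : Real.sqrt (‖x‖^2 * ‖y‖^2 - c^2) ≤ ‖x‖ * N / t := by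
    have := Real.sqrt_le_sqrt key
    rwa [Real.sqrt_sq (by positivity)] at this
  rw [projDist, div_le_div_iff₀ (by positivity) (by positivity)]
  calc Real.sqrt (‖x‖^2 * ‖y‖^2 - c^2) * (t * ‖y‖)
      ≤ (‖x‖ * N / t) * (t * ‖y‖) := by
        apply mul_le_mul_of_nonneg_right h1 (by positivity)
    _ = N * (‖x‖ * ‖y‖) := by field_simp

-- step 2: approximation with coprime pair
lemma exists_approx {n : ℕ} (y : Fin n → ℝ) (κ κ' : Fin n) (hne : κ ≠ κ') (T : ℝ) :
    ∃ (x : Fin n → ℤ) (t : ℝ), T ≤ t ∧ 0 < t ∧ IsCoprime (x κ) (x κ') ∧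
      ∀ i, |(x i : ℝ) - t * y i| ≤ 2 := by
  by_cases hyk : y κ = 0
  · refine ⟨fun i => if i = κ then 1 else round ((max T 1) * y i), max T 1,
      le_max_left _ _, lt_of_lt_of_le one_pos (le_max_right _ _), ?_, ?_⟩
    · simp only [if_pos rfl]
      exact isCoprime_one_left
    · intro i
      by_cases hi : i = κ
      · subst hi
        simp [hyk]
      · simp only [if_neg hi]
        calc |((round ((max T 1) * y i) : ℤ) : ℝ) - (max T 1) * y i|
            = |(max T 1) * y i - round ((max T 1) * y i)| := by rw [abs_sub_comm]
          _ ≤ 1/2 := abs_sub_round _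
          _ ≤ 2 := by norm_num
  · -- y κ ≠ 0
    have hay : (0:ℝ) < |y κ| := abs_pos.mpr hyk
    obtain ⟨q, hq1, hq2⟩ := Nat.exists_infinite_primes (Nat.ceil ((max T 1) * |y κ|) + 1)
    have hq0 : (0:ℝ) < (q:ℝ) := by
      have := hq2.two_le
      positivity
    set t : ℝ := (q : ℝ) / |y κ| with htdef
    have ht0 : 0 < t := by positivity
    have htq : t * y κ = (if 0 ≤ y κ then (q:ℝ) else -(q:ℝ)) := by
      rcases le_or_gt 0 (y κ) with h | h
      · rw [if_pos h, htdef, abs_of_pos (lt_of_le_of_ne h (Ne.symm hyk))]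
        exact div_mul_cancel₀ _ hyk
      · rw [if_neg (not_le.mpr h), htdef, abs_of_neg h, div_mul_eq_mul_div,
          div_eq_iff (neg_ne_zero.mpr hyk)]
        ring
    have hTt : T ≤ t := by
      have h1 : (max T 1) * |y κ| ≤ (q:ℝ) := by
        calc (max T 1) * |y κ| ≤ (Nat.ceil ((max T 1) * |y κ|) : ℝ) := Nat.le_ceil _
          _ ≤ (q:ℝ) := by exact_mod_cast le_trans (Nat.le_succ _) hq1
      have := (le_div_iff₀ hay).mpr h1
      exact le_trans (le_max_left T 1) this
    classical
    set r : ℤ := round (t * y κ') with hr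
    set c : ℤ := if (q:ℤ) ∣ r then r + 1 else r with hcdef
    set xf : Fin n → ℤ :=
      fun i => if i = κ then (if 0 ≤ y κ then (q:ℤ) else -(q:ℤ))
        else if i = κ' then c else round (t * y i) with hxf
    have hxfκ : xf κ = (if 0 ≤ y κ then (q:ℤ) else -(q:ℤ)) := by simp [hxf]
    have hxfκ' : xf κ' = c := by simp [hxf, hne.symm]
    have hqZ : Prime ((q:ℤ)) := Nat.prime_iff_prime_int.mp hq2
    refine ⟨xf, t, hTt, ht0, ?_, ?_⟩
    · have hndvd : ¬ (q:ℤ) ∣ c := by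
        rw [hcdef]
        split_ifs with hd
        · intro hcon
          have h1 : (q:ℤ) ∣ 1 := (dvd_add_right hd).mp hcon
          have h2 := Int.le_of_dvd one_pos h1
          have := hq2.two_le
          omega
        · exact hd
      have base : IsCoprime ((q:ℤ)) c := (Prime.coprime_iff_not_dvd hqZ).mpr hndvd
      rw [hxfκ, hxfκ']
      split_ifs with h
      · exact base
      · exact base.neg_left
    · intro i
      by_cases hi : i = κ
      · rw [hi]
        have hxe : ((xf κ : ℤ) : ℝ) = t * y κ := by
          rw [hxfκ, htq]
          split_ifs <;> push_cast <;> ring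
        rw [hxe]
        simp
      · by_cases hi2 : i = κ'
        · rw [hi2, hxfκ']
          have hround : |(r : ℝ) - t * y κ'| ≤ 1/2 := by
            rw [abs_sub_comm, hr]
            exact abs_sub_round _
          have hcc : c = r + 1 ∨ c = r := by
            rw [hcdef]
            split_ifs <;> [exact Or.inl rfl; exact Or.inr rfl]
          rcases hcc with hcc | hcc <;> rw [hcc]
          · push_cast
            have habs : |(r:ℝ) + 1 - t * y κ'| ≤ |(r:ℝ) - t * y κ'| + |(1:ℝ)| := by
              have h0 := abs_add_le ((r:ℝ) - t * y κ') 1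
              rw [show (r:ℝ) + 1 - t * y κ' = (r:ℝ) - t * y κ' + 1 by ring]
              exact h0
            rw [abs_one] at habs
            linarith
          · exact le_trans hround (by norm_num)
        · have : xf i = round (t * y i) := by simp [hxf, hi, hi2]
          rw [this]
          calc |((round (t * y i) : ℤ) : ℝ) - t * y i|
              = |t * y i - round (t * y i)| := by rw [abs_sub_comm]
            _ ≤ 1/2 := abs_sub_round _
            _ ≤ 2 := by norm_num

-- helper: mulVec for matrices that are identity except two columns
lemma mulVec_two_cols {n : ℕ} (A : Matrix (Fin n) (Fin n) ℤ) (κ κ' : Fin n) (hne : κ ≠ κ')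
    (h : ∀ j : Fin n, j ≠ κ → j ≠ κ' → ∀ i, A i j = if i = j then 1 else 0)
    (w : Fin n → ℤ) (i : Fin n) :
    (A *ᵥ w) i = A i κ * w κ + A i κ' * w κ' +
      (if i = κ ∨ i = κ' then 0 else w i) := by
  classical
  have hsplit : ∀ j : Fin n, A i j * w j =
      (if j = κ then A i κ * w κ else 0) + (if j = κ' then A i κ' * w κ' else 0) +
      (if j = κ ∨ j = κ' then 0 else (if j = i then w i else 0)) := by
    intro j
    by_cases h1 : j = κ
    · subst h1
      simp [hne]
    · by_cases h2 : j = κ'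
      · subst h2
        simp [h1]
      · simp only [if_neg h1, if_neg h2, zero_add]
        rw [h j h1 h2 i]
        by_cases h3 : j = i
        · subst h3
          simp [h1, h2]
        · simp [h3, Ne.symm h3, h1, h2]
  rw [Matrix.mulVec, dotProduct]
  rw [Finset.sum_congr rfl (fun j _ => hsplit j)]
  rw [Finset.sum_add_distrib, Finset.sum_add_distrib, Finset.sum_ite_eq',
    Finset.sum_ite_eq']
  simp only [Finset.mem_univ, if_true]
  congr 1
  by_cases hiκ : i = κ
  · rw [if_pos (Or.inl hiκ)]
    rw [Finset.sum_eq_zero]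
    intro j _
    by_cases hj : j = κ ∨ j = κ'
    · rw [if_pos hj]
    · rw [if_neg hj]
      rw [if_neg]
      intro hji
      exact hj (Or.inl (hji.trans hiκ))
  · by_cases hiκ' : i = κ'
    · rw [if_pos (Or.inr hiκ')]
      rw [Finset.sum_eq_zero]
      intro j _
      by_cases hj : j = κ ∨ j = κ'
      · rw [if_pos hj]
      · rw [if_neg hj]
        rw [if_neg]
        intro hji
        exact hj (Or.inr (hji.trans hiκ'))
    · rw [if_neg (by tauto)]
      rw [Finset.sum_eq_single i]
      · rw [if_neg (by tauto), if_pos rfl]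
      · intro j _ hji
        by_cases hj : j = κ ∨ j = κ'
        · rw [if_pos hj]
        · rw [if_neg hj, if_neg hji]
      · intro hmem
        exact absurd (Finset.mem_univ i) hmem

lemma smat {n : ℕ} (x : Fin n → ℤ) (κ κ' : Fin n) (hne : κ ≠ κ') (a b : ℤ)
    (hab : a * x κ + b * x κ' = 1) :
    ∃ S S' : Matrix (Fin n) (Fin n) ℤ, S * S' = 1 ∧ S' * S = 1 ∧
      (∀ j : Fin n, j ≠ κ → j ≠ κ' → ∀ i, S i j = if i = j then 1 else 0) ∧
      (∀ i, S i κ = x i) := by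
  classical
  have hne' : κ' ≠ κ := Ne.symm hne
  set S : Matrix (Fin n) (Fin n) ℤ := Matrix.of fun i j =>
    if j = κ then x i else if j = κ' then (if i = κ then -b else if i = κ' then a else 0)
      else if i = j then 1 else 0 with hS
  set S' : Matrix (Fin n) (Fin n) ℤ := Matrix.of fun i j =>
    if j = κ then (if i = κ then a else if i = κ' then -(x κ') else -(a * x i))
      else if j = κ' then (if i = κ then b else if i = κ' then x κ else -(b * x i))
      else if i = j then 1 else 0 with hS'
  have hScol : ∀ j : Fin n, j ≠ κ → j ≠ κ' → ∀ i, S i j = if i = j then 1 else 0 := by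
    intro j h1 h2 i
    simp only [hS, Matrix.of_apply, if_neg h1, if_neg h2]
  have hS'col : ∀ j : Fin n, j ≠ κ → j ≠ κ' → ∀ i, S' i j = if i = j then 1 else 0 := by
    intro j h1 h2 i
    simp only [hS', Matrix.of_apply, if_neg h1, if_neg h2]
  have hSκ : ∀ i, S i κ = x i := by
    intro i
    simp only [hS, Matrix.of_apply, eq_self_iff_true, if_true]
  have hSκ' : ∀ i, S i κ' = (if i = κ then -b else if i = κ' then a else 0) := by
    intro i
    simp only [hS, Matrix.of_apply, if_neg hne', eq_self_iff_true, if_true]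
  have hS'κ : ∀ i, S' i κ = (if i = κ then a else if i = κ' then -(x κ') else -(a * x i)) := by
    intro i
    simp only [hS', Matrix.of_apply, eq_self_iff_true, if_true]
  have hS'κ' : ∀ i, S' i κ' = (if i = κ then b else if i = κ' then x κ else -(b * x i)) := by
    intro i
    simp only [hS', Matrix.of_apply, if_neg hne', eq_self_iff_true, if_true]
  have hmS : ∀ (w : Fin n → ℤ) (i : Fin n), (S *ᵥ w) i =
      (if i = κ then x κ * w κ - b * w κ' else if i = κ' then x κ' * w κ + a * w κ'
        else w i + x i * w κ) := by
    intro w i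
    rw [mulVec_two_cols S κ κ' hne hScol w i, hSκ, hSκ']
    by_cases h1 : i = κ
    · rw [h1, if_pos rfl, if_pos (Or.inl rfl), if_pos rfl]
      ring
    · by_cases h2 : i = κ'
      · rw [h2, if_neg hne', if_pos rfl, if_pos (Or.inr rfl), if_neg hne', if_pos rfl]
        ring
      · rw [if_neg h1, if_neg h2, if_neg (by tauto : ¬(i = κ ∨ i = κ')), if_neg h1,
          if_neg h2]
        ring
  have hmS' : ∀ (w : Fin n → ℤ) (i : Fin n), (S' *ᵥ w) i =
      (if i = κ then a * w κ + b * w κ' else if i = κ' then -(x κ') * w κ + x κ * w κ'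
        else w i - a * x i * w κ - b * x i * w κ') := by
    intro w i
    rw [mulVec_two_cols S' κ κ' hne hS'col w i, hS'κ, hS'κ']
    by_cases h1 : i = κ
    · rw [h1, if_pos rfl, if_pos rfl, if_pos (Or.inl rfl), if_pos rfl]
      ring
    · by_cases h2 : i = κ'
      · rw [h2, if_neg hne', if_neg hne', if_pos rfl, if_pos rfl, if_pos (Or.inr rfl),
          if_neg hne', if_pos rfl]
        ring
      · rw [if_neg h1, if_neg h2, if_neg h1, if_neg h2, if_neg (by tauto : ¬(i = κ ∨ i = κ')),
          if_neg h1, if_neg h2]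
        ring
  have hSS' : S * S' = 1 := by
    apply Matrix.toLin'.injective
    rw [Matrix.toLin'_mul, Matrix.toLin'_one]
    apply LinearMap.ext
    intro w
    rw [LinearMap.comp_apply]
    simp only [Matrix.toLin'_apply, LinearMap.id_apply]
    funext i
    have e1 : (S' *ᵥ w) κ = a * w κ + b * w κ' := by
      rw [hmS', if_pos rfl]
    have e2 : (S' *ᵥ w) κ' = -(x κ') * w κ + x κ * w κ' := by
      rw [hmS', if_neg hne', if_pos rfl]
    rw [hmS]
    by_cases h1 : i = κ
    · rw [if_pos h1, e1, e2, h1]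
      linear_combination w κ * hab
    · by_cases h2 : i = κ'
      · rw [if_neg h1, if_pos h2, e1, e2, h2]
        linear_combination w κ' * hab
      · rw [if_neg h1, if_neg h2, hmS', if_neg h1, if_neg h2, e1]
        ring
  have hS'S : S' * S = 1 := mul_eq_one_comm.mp hSS'
  exact ⟨S, S', hSS', hS'S, hScol, hSκ⟩

noncomputable def matE {n : ℕ} (A : Matrix (Fin n) (Fin n) ℝ) :
    EuclideanSpace ℝ (Fin n) →ₗ[ℝ] EuclideanSpace ℝ (Fin n) :=
  (WithLp.linearEquiv 2 ℝ (Fin n → ℝ)).symm.toLinearMap ∘ₗ A.mulVecLin ∘ₗ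
    (WithLp.linearEquiv 2 ℝ (Fin n → ℝ)).toLinearMap

lemma matE_apply {n : ℕ} (A : Matrix (Fin n) (Fin n) ℝ) (x : EuclideanSpace ℝ (Fin n))
    (i : Fin n) : matE A x i = ∑ l, A i l * x l := rfl

lemma matE_comp {n : ℕ} (A B : Matrix (Fin n) (Fin n) ℝ) (x : EuclideanSpace ℝ (Fin n)) :
    matE A (matE B x) = matE (A * B) x := by
  apply (WithLp.equiv 2 (Fin n → ℝ)).injective
  show A *ᵥ (B *ᵥ (WithLp.equiv 2 (Fin n → ℝ) x)) = (A * B) *ᵥ (WithLp.equiv 2 (Fin n → ℝ) x)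
  rw [Matrix.mulVec_mulVec]

lemma matE_one {n : ℕ} (x : EuclideanSpace ℝ (Fin n)) : matE 1 x = x := by
  apply (WithLp.equiv 2 (Fin n → ℝ)).injective
  show (1 : Matrix (Fin n) (Fin n) ℝ) *ᵥ _ = _
  rw [Matrix.one_mulVec]
  rfl

lemma matE_int {n : ℕ} (A : Matrix (Fin n) (Fin n) ℤ) (x : EuclideanSpace ℝ (Fin n))
    (hx : IsIntPt x) : IsIntPt (matE (A.map (Int.cast : ℤ → ℝ)) x) := by
  choose ξ hξ using hx
  intro i
  refine ⟨∑ l, A i l * ξ l, ?_⟩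
  rw [matE_apply]
  push_cast
  apply Finset.sum_congr rfl
  intro l _
  rw [hξ l, Matrix.map_apply]

lemma key {m n : ℕ} (hmn : m < n) (v : Fin m → EuclideanSpace ℝ (Fin n))
    (hv : LinearIndependent ℝ v) {δ : ℝ} (hδ : 0 < δ) :
    ∀ k, k ≤ m → ∃ M M' : Matrix (Fin n) (Fin n) ℤ, M * M' = 1 ∧
      ∀ j : Fin m, (j : ℕ) < k →
        projDist (toE (fun i => M i (Fin.castLE hmn.le j))) (v j) ≤ δ := by
  intro k
  induction k with
  | zero =>
    exact fun _ => ⟨1, 1, Matrix.one_mul 1, fun j hj => absurd hj (Nat.not_lt_zero _)⟩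
  | succ k ih =>
    intro hk1
    obtain ⟨M, M', hMM', hgood⟩ := ih (Nat.le_of_succ_le hk1)
    have hkm : k < m := hk1
    have hkn : k < n := lt_trans hkm hmn
    have hk1n : k + 1 < n := lt_of_le_of_lt hk1 hmn
    set κ : Fin n := ⟨k, hkn⟩ with hκ
    set κ' : Fin n := ⟨k + 1, hk1n⟩ with hκ'
    have hne : κ ≠ κ' := by
      simp only [hκ, hκ', ne_eq, Fin.mk.injEq]
      omega
    set vk : EuclideanSpace ℝ (Fin n) := v ⟨k, hkm⟩ with hvkdef
    have hvk : vk ≠ 0 := hv.ne_zero _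
    have hvkn : (0:ℝ) < ‖vk‖ := norm_pos_iff.mpr hvk
    set Mr : Matrix (Fin n) (Fin n) ℝ := M.map (Int.cast : ℤ → ℝ) with hMr
    set Mr' : Matrix (Fin n) (Fin n) ℝ := M'.map (Int.cast : ℤ → ℝ) with hMr'
    have hMrMr' : Mr * Mr' = 1 := by
      have h1 : Mr = M.map (Int.castRingHom ℝ) := rfl
      have h2 : Mr' = M'.map (Int.castRingHom ℝ) := rfl
      rw [h1, h2, ← Matrix.map_mul, hMM', Matrix.map_one]
      · exact map_zero _
      · exact map_one _
    set L := LinearMap.toContinuousLinearMap (matE Mr) with hL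
    set C : ℝ := ‖L‖ with hC
    have hC0 : 0 ≤ C := norm_nonneg _
    set B : ℝ := Real.sqrt (n * 4) with hB
    have hB0 : 0 ≤ B := Real.sqrt_nonneg _
    set yE : EuclideanSpace ℝ (Fin n) := matE Mr' vk with hyE
    obtain ⟨x, t, hTt, ht0, hcop, herr⟩ :=
      exists_approx (fun i => yE i) κ κ' hne ((C * B + 1) / (δ * ‖vk‖))
    obtain ⟨a, b, hab⟩ := hcop
    obtain ⟨S, S', hSS', hS'S, hScol, hSκ⟩ := smat x κ κ' hne a b
      (by linear_combination hab)
    refine ⟨M * S, S' * M', ?_, ?_⟩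
    · calc M * S * (S' * M') = M * (S * S') * M' := by
            rw [Matrix.mul_assoc, Matrix.mul_assoc, Matrix.mul_assoc]
        _ = 1 := by rw [hSS', Matrix.mul_one, hMM']
    intro j hj
    by_cases hjk : (j : ℕ) < k
    · have hjκ : Fin.castLE hmn.le j ≠ κ := by
        simp only [hκ, ne_eq, Fin.ext_iff, Fin.coe_castLE]
        omega
      have hjκ' : Fin.castLE hmn.le j ≠ κ' := by
        simp only [hκ', ne_eq, Fin.ext_iff, Fin.coe_castLE]
        omega
      have hcol : ∀ i, (M * S) i (Fin.castLE hmn.le j) = M i (Fin.castLE hmn.le j) := by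
        intro i
        rw [Matrix.mul_apply]
        calc ∑ l, M i l * S l (Fin.castLE hmn.le j)
            = ∑ l, (if l = Fin.castLE hmn.le j then M i l else 0) := by
              apply Finset.sum_congr rfl
              intro l _
              rw [hScol _ hjκ hjκ' l]
              by_cases hl : l = Fin.castLE hmn.le j
              · rw [if_pos hl, if_pos hl, mul_one]
              · rw [if_neg hl, if_neg hl, mul_zero]
          _ = M i (Fin.castLE hmn.le j) := by
              rw [Finset.sum_ite_eq']
              simp
      have : (fun i => (M * S) i (Fin.castLE hmn.le j)) =
          (fun i => M i (Fin.castLE hmn.le j)) := funext hcol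
      rw [show toE (fun i => (M * S) i (Fin.castLE hmn.le j)) =
          toE (fun i => M i (Fin.castLE hmn.le j)) by rw [this]]
      exact hgood j hjk
    · have hjek : (j : ℕ) = k := by omega
      have hjcast : Fin.castLE hmn.le j = κ := by
        simp only [hκ, Fin.ext_iff, Fin.coe_castLE]
        exact hjek
      have hj2 : j = (⟨k, hkm⟩ : Fin m) := by
        apply Fin.ext
        simpa using hjek
      have hvj : v j = vk := by
        rw [hvkdef, hj2]
      have hcol : ∀ i, (M * S) i (Fin.castLE hmn.le j) = (M *ᵥ x) i := by
        intro i
        rw [hjcast, Matrix.mul_apply]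
        apply Finset.sum_congr rfl
        intro l _
        rw [hSκ l]
      rw [congrArg toE (funext hcol)]
      rw [hvj]
      set c : EuclideanSpace ℝ (Fin n) := toE (M *ᵥ x) with hc
      have hstep1 : projDist c vk ≤ ‖c - t • vk‖ / (t * ‖vk‖) := projDist_le c vk t ht0 hvk
      set w : EuclideanSpace ℝ (Fin n) := toE x - t • yE with hw
      have hceq : c - t • vk = matE Mr w := by
        have h1 : matE Mr (toE x) = c := by
          apply (WithLp.equiv 2 (Fin n → ℝ)).injective
          funext i
          show ∑ l, Mr i l * (x l : ℝ) = ((M *ᵥ x) i : ℝ)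
          rw [Matrix.mulVec, dotProduct]
          push_cast
          rfl
        have h2 : matE Mr yE = vk := by
          rw [hyE, matE_comp, hMrMr', matE_one]
        rw [hw, map_sub, map_smul, h1, h2]
      have hwnorm : ‖w‖ ≤ B := by
        rw [EuclideanSpace.norm_eq, hB]
        apply Real.sqrt_le_sqrt
        calc ∑ i, ‖w i‖ ^ 2 ≤ ∑ _i : Fin n, (4:ℝ) := by
              apply Finset.sum_le_sum
              intro i _
              have hwi : w i = (x i : ℝ) - t * yE i := by
                rw [hw]
                simp [toE, smul_eq_mul]
              rw [Real.norm_eq_abs, hwi]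
              have := herr i
              nlinarith [abs_nonneg ((x i : ℝ) - t * yE i),
                sq_abs ((x i : ℝ) - t * yE i)]
          _ = (n : ℝ) * 4 := by
              rw [Finset.sum_const, Finset.card_univ, Fintype.card_fin, nsmul_eq_mul]
      have hbound : ‖c - t • vk‖ ≤ C * B := by
        rw [hceq]
        have h3 : matE Mr w = L w := by
          rw [hL, LinearMap.coe_toContinuousLinearMap']
        rw [h3]
        calc ‖L w‖ ≤ C * ‖w‖ := L.le_opNorm w
          _ ≤ C * B := by
              apply mul_le_mul_of_nonneg_left hwnorm hC0
      have htpos : 0 < t * ‖vk‖ := mul_pos ht0 hvkn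
      calc projDist c vk ≤ ‖c - t • vk‖ / (t * ‖vk‖) := hstep1
        _ ≤ (C * B) / (t * ‖vk‖) := by
            gcongr
        _ ≤ δ := by
            rw [div_le_iff₀ htpos]
            have h4 : (C * B + 1) ≤ t * (δ * ‖vk‖) := by
              have h5 := (div_le_iff₀ (mul_pos hδ hvkn)).mp hTt
              exact h5
            nlinarith

theorem stmt1 {m n : ℕ} (hmn : m < n) (v : Fin m → EuclideanSpace ℝ (Fin n))
    (hv : LinearIndependent ℝ v) (δ : ℝ) (hδ : 0 < δ) :
    ∃ T : EuclideanSpace ℝ (Fin n) ≃ₗ[ℝ] EuclideanSpace ℝ (Fin n),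
      (∀ x, IsIntPt x ↔ IsIntPt (T x)) ∧
      ∀ j : Fin m,
        projDist (T (EuclideanSpace.single (Fin.castLE hmn.le j) 1)) (v j) ≤ δ := by
  obtain ⟨M, M', hMM', hgood⟩ := key hmn v hv hδ m le_rfl
  have hM'M : M' * M = 1 := mul_eq_one_comm.mp hMM'
  set Mr : Matrix (Fin n) (Fin n) ℝ := M.map (Int.cast : ℤ → ℝ) with hMr
  set Mr' : Matrix (Fin n) (Fin n) ℝ := M'.map (Int.cast : ℤ → ℝ) with hMr'
  have cast1 : ∀ (A B : Matrix (Fin n) (Fin n) ℤ), A * B = 1 →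
      A.map (Int.cast : ℤ → ℝ) * B.map (Int.cast : ℤ → ℝ) = 1 := by
    intro A B hAB
    have h1 : A.map (Int.cast : ℤ → ℝ) = A.map (Int.castRingHom ℝ) := rfl
    have h2 : B.map (Int.cast : ℤ → ℝ) = B.map (Int.castRingHom ℝ) := rfl
    rw [h1, h2, ← Matrix.map_mul, hAB, Matrix.map_one]
    · exact map_zero _
    · exact map_one _
  have hr1 : Mr * Mr' = 1 := cast1 M M' hMM'
  have hr2 : Mr' * Mr = 1 := cast1 M' M hM'M
  have hcomp1 : matE Mr ∘ₗ matE Mr' = LinearMap.id := by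
    apply LinearMap.ext
    intro z
    rw [LinearMap.comp_apply, matE_comp, hr1, matE_one, LinearMap.id_apply]
  have hcomp2 : matE Mr' ∘ₗ matE Mr = LinearMap.id := by
    apply LinearMap.ext
    intro z
    rw [LinearMap.comp_apply, matE_comp, hr2, matE_one, LinearMap.id_apply]
  set T : EuclideanSpace ℝ (Fin n) ≃ₗ[ℝ] EuclideanSpace ℝ (Fin n) :=
    LinearEquiv.ofLinear (matE Mr) (matE Mr') hcomp1 hcomp2 with hT
  have hTapp : ∀ x, T x = matE Mr x := fun x => rfl
  refine ⟨T, ?_, ?_⟩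
  · intro x
    constructor
    · intro hx
      rw [hTapp]
      exact matE_int M x hx
    · intro hx
      rw [hTapp] at hx
      have h5 := matE_int M' _ hx
      rw [matE_comp, hr2, matE_one] at h5
      exact h5
  · intro j
    have hTj : T (EuclideanSpace.single (Fin.castLE hmn.le j) 1) =
        toE (fun i => M i (Fin.castLE hmn.le j)) := by
      rw [hTapp]
      apply (WithLp.equiv 2 (Fin n → ℝ)).injective
      funext i
      show ∑ l, Mr i l * (EuclideanSpace.single (Fin.castLE hmn.le j) (1:ℝ)) l
          = ((M i (Fin.castLE hmn.le j) : ℤ) : ℝ)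
      calc ∑ l, Mr i l * (EuclideanSpace.single (Fin.castLE hmn.le j) (1:ℝ)) l
          = ∑ l, (if l = Fin.castLE hmn.le j then Mr i l else 0) := by
            apply Finset.sum_congr rfl
            intro l _
            rw [EuclideanSpace.single_apply]
            by_cases h : l = Fin.castLE hmn.le j
            · rw [if_pos h, if_pos h, mul_one]
            · rw [if_neg h, if_neg h, mul_zero]
        _ = Mr i (Fin.castLE hmn.le j) := by
            rw [Finset.sum_ite_eq']
            simp
        _ = ((M i (Fin.castLE hmn.le j) : ℤ) : ℝ) := rfl
    rw [hTj]
    exact hgood j j.isLt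
end

section
/- Equivalently stated: for linearly independent vectors v_1,…,v_m of R^n with 0 ≤ m < n and any δ > 0, there exists a basis (x_1,…,x_n) of the lattice Z^n such that dist(x_j, v_j) ≤ δ for each j = 1,…,m. -/
open scoped BigOperators

lemma projDist_smul_right {n : ℕ} (x y : EuclideanSpace ℝ (Fin n)) {t : ℝ} (ht : 0 < t) :
    projDist x (t • y) = projDist x y := by
  unfold projDist
  have h1 : ‖t • y‖ = t * ‖y‖ := by
    rw [norm_smul, Real.norm_eq_abs, abs_of_pos ht]
  have h2 : (inner ℝ x (t • y) : ℝ) = t * inner ℝ x y := real_inner_smul_right x y t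
  rw [h1, h2]
  have h3 : ‖x‖^2 * (t*‖y‖)^2 - (t * inner ℝ x y : ℝ)^2
      = t^2 * (‖x‖^2 * ‖y‖^2 - (inner ℝ x y : ℝ)^2) := by ring
  rw [h3, Real.sqrt_mul (sq_nonneg t), Real.sqrt_sq ht.le]
  rw [show ‖x‖ * (t * ‖y‖) = t * (‖x‖ * ‖y‖) by ring]
  rw [mul_div_mul_left _ _ ht.ne']

lemma projDist_le_unit {n : ℕ} (x y : EuclideanSpace ℝ (Fin n)) (hx : x ≠ 0) (hy : y ≠ 0) :
    projDist x y ≤ ‖‖x‖⁻¹ • x - ‖y‖⁻¹ • y‖ := by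
  have ha : (0:ℝ) < ‖x‖ := norm_pos_iff.mpr hx
  have hb : (0:ℝ) < ‖y‖ := norm_pos_iff.mpr hy
  have hcs : |(inner ℝ x y : ℝ)| ≤ ‖x‖ * ‖y‖ := abs_real_inner_le_norm x y
  have hn : ‖‖x‖⁻¹ • x - ‖y‖⁻¹ • y‖^2 = 2 - 2 * (‖x‖⁻¹ * (‖y‖⁻¹ * (inner ℝ x y : ℝ))) := by
    rw [norm_sub_sq_real, norm_smul, norm_smul, real_inner_smul_left, real_inner_smul_right]
    simp only [Real.norm_eq_abs, abs_of_pos (inv_pos.mpr ha), abs_of_pos (inv_pos.mpr hb)]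
    rw [inv_mul_cancel₀ ha.ne', inv_mul_cancel₀ hb.ne']
    ring
  unfold projDist
  rw [div_le_iff₀ (by positivity)]
  have key : ‖x‖^2 * ‖y‖^2 - (inner ℝ x y : ℝ)^2 ≤ (‖‖x‖⁻¹ • x - ‖y‖⁻¹ • y‖ * (‖x‖*‖y‖))^2 := by
    rw [mul_pow, hn]
    have expand : (2 - 2 * (‖x‖⁻¹ * (‖y‖⁻¹ * (inner ℝ x y : ℝ)))) * (‖x‖*‖y‖)^2
        = 2*‖x‖^2*‖y‖^2 - 2*‖x‖*‖y‖*(inner ℝ x y : ℝ) := by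
      field_simp
    rw [expand]
    nlinarith [sq_nonneg (‖x‖*‖y‖ - (inner ℝ x y : ℝ))]
  calc Real.sqrt (‖x‖^2 * ‖y‖^2 - (inner ℝ x y : ℝ)^2)
      ≤ Real.sqrt ((‖‖x‖⁻¹ • x - ‖y‖⁻¹ • y‖ * (‖x‖*‖y‖))^2) := Real.sqrt_le_sqrt key
    _ = ‖‖x‖⁻¹ • x - ‖y‖⁻¹ • y‖ * (‖x‖*‖y‖) := Real.sqrt_sq (by positivity)

lemma unit_diff_le {n : ℕ} (x y : EuclideanSpace ℝ (Fin n)) (hx : x ≠ 0) (hy : y ≠ 0) :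
    ‖‖x‖⁻¹ • x - ‖y‖⁻¹ • y‖ ≤ 2 * ‖x - y‖ / ‖y‖ := by
  have ha : (0:ℝ) < ‖x‖ := norm_pos_iff.mpr hx
  have hb : (0:ℝ) < ‖y‖ := norm_pos_iff.mpr hy
  have tri : ‖‖x‖⁻¹ • x - ‖y‖⁻¹ • y‖ ≤ ‖‖x‖⁻¹ • x - ‖y‖⁻¹ • x‖ + ‖‖y‖⁻¹ • x - ‖y‖⁻¹ • y‖ :=
    norm_sub_le_norm_sub_add_norm_sub _ _ _
  have e : ‖x‖⁻¹ - ‖y‖⁻¹ = (‖y‖ - ‖x‖) / (‖y‖ * ‖x‖) := by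
    field_simp
  have h1 : ‖‖x‖⁻¹ • x - ‖y‖⁻¹ • x‖ = |‖y‖ - ‖x‖| / ‖y‖ := by
    rw [← sub_smul, norm_smul, Real.norm_eq_abs, e, abs_div,
      abs_of_pos (mul_pos hb ha)]
    field_simp
  have h2 : ‖‖y‖⁻¹ • x - ‖y‖⁻¹ • y‖ = ‖x - y‖ / ‖y‖ := by
    rw [← smul_sub, norm_smul, Real.norm_eq_abs, abs_of_pos (inv_pos.mpr hb), inv_mul_eq_div]
  have h3 : |‖y‖ - ‖x‖| ≤ ‖x - y‖ := by
    rw [abs_sub_comm]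
    exact abs_norm_sub_norm_le x y
  have h4 : |‖y‖ - ‖x‖| / ‖y‖ ≤ ‖x - y‖ / ‖y‖ := by gcongr
  calc ‖‖x‖⁻¹ • x - ‖y‖⁻¹ • y‖ ≤ |‖y‖ - ‖x‖| / ‖y‖ + ‖x - y‖ / ‖y‖ := by
        rw [← h1, ← h2]; exact tri
    _ ≤ ‖x - y‖ / ‖y‖ + ‖x - y‖ / ‖y‖ := by gcongr
    _ = 2 * ‖x - y‖ / ‖y‖ := by ring

lemma projDist_le_of_close {n : ℕ} (x y : EuclideanSpace ℝ (Fin n)) (hx : x ≠ 0) (hy : y ≠ 0) :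
    projDist x y ≤ 2 * ‖x - y‖ / ‖y‖ :=
  (projDist_le_unit x y hx hy).trans (unit_diff_le x y hx hy)

lemma toE_sum {n : ℕ} (c : Fin n → ℤ) (U : Fin n → Fin n → ℤ) :
    toE (fun i => ∑ k, c k * U k i) = ∑ k, (c k : ℝ) • toE (U k) := by
  apply PiLp.ext
  intro i
  rw [WithLp.ofLp_sum, Finset.sum_apply]
  simp only [toE, WithLp.equiv_symm_apply, PiLp.toLp_apply, PiLp.smul_apply, smul_eq_mul]
  push_cast
  ring

set_option maxHeartbeats 1000000 in
theorem stmt2 {m n : ℕ} (hmn : m < n) (v : Fin m → EuclideanSpace ℝ (Fin n))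
    (hv : LinearIndependent ℝ v) (δ : ℝ) (hδ : 0 < δ) :
    ∃ x : Fin n → Fin n → ℤ,
      (∀ y : Fin n → ℤ, ∃ c : Fin n → ℤ, ∀ i, y i = ∑ j, c j * x j i) ∧
      ∀ j : Fin m, projDist (toE (x (Fin.castLE hmn.le j))) (v j) ≤ δ := by
  suffices H : ∀ j : ℕ, j ≤ m → ∃ U : Fin n → Fin n → ℤ,
      Submodule.span ℤ (Set.range U) = ⊤ ∧
      LinearIndependent ℝ
        (fun i : Fin m => if (i:ℕ) < j then toE (U (Fin.castLE hmn.le i)) else v i) ∧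
      ∀ i : Fin m, (i:ℕ) < j → projDist (toE (U (Fin.castLE hmn.le i))) (v i) ≤ δ by
    obtain ⟨U, hspan, -, hdist⟩ := H m le_rfl
    refine ⟨U, ?_, fun j => hdist j j.isLt⟩
    intro y
    have hy : y ∈ Submodule.span ℤ (Set.range U) := by rw [hspan]; exact Submodule.mem_top
    obtain ⟨c, hc⟩ := (Submodule.mem_span_range_iff_exists_fun ℤ).mp hy
    refine ⟨c, fun i => ?_⟩
    rw [← hc, Finset.sum_apply]
    simp [mul_comm]
  intro j
  induction j with
  | zero =>
      intro _
      refine ⟨fun i => Pi.single i 1, ?_, by simpa using hv, by omega⟩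
      · rw [eq_top_iff]
        intro y _
        rw [Submodule.mem_span_range_iff_exists_fun ℤ]
        refine ⟨y, ?_⟩
        funext i
        rw [Finset.sum_apply]
        simp [Pi.single_apply]
  | succ j ih =>
      intro hj
      obtain ⟨U, hspan, hLI, hdist⟩ := ih (by omega)
      have hjm : j < m := by omega
      have hjn : j < n := by omega
      set jm : Fin m := ⟨j, hjm⟩ with hjm_def
      set jn : Fin n := ⟨j, hjn⟩ with hjn_def
      set uE : Fin n → EuclideanSpace ℝ (Fin n) := fun r => toE (U r) with huE
      set Hf : Fin m → EuclideanSpace ℝ (Fin n) :=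
        fun i => if (i:ℕ) < j then toE (U (Fin.castLE hmn.le i)) else v i with hHf
      -- ℝ-span of the rows is everything
      have hsingle : ∀ i : Fin n,
          (EuclideanSpace.basisFun (Fin n) ℝ) i ∈ Submodule.span ℝ (Set.range uE) := by
        intro i
        have hPi : (Pi.single i 1 : Fin n → ℤ) ∈ Submodule.span ℤ (Set.range U) := by
          rw [hspan]; trivial
        obtain ⟨cc, hcc⟩ := (Submodule.mem_span_range_iff_exists_fun ℤ).mp hPi
        have hfun : (fun i' => ∑ k, cc k * U k i') = (Pi.single i 1 : Fin n → ℤ) := by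
          funext i'
          rw [← hcc, Finset.sum_apply]
          simp
        have h2 : toE (Pi.single i 1) = ∑ k, (cc k : ℝ) • uE k := by
          rw [← hfun, toE_sum]
        have h3 : (EuclideanSpace.basisFun (Fin n) ℝ) i = toE (Pi.single i 1) := by
          apply PiLp.ext
          intro i'
          simp [toE, EuclideanSpace.basisFun_apply, EuclideanSpace.single_apply,
            Pi.single_apply, WithLp.equiv_symm_apply]
        rw [h3, h2]
        exact Submodule.sum_mem _ fun k _ =>
          Submodule.smul_mem _ _ (Submodule.subset_span ⟨k, rfl⟩)
      have hspanR : ⊤ ≤ Submodule.span ℝ (Set.range uE) := by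
        rw [← (EuclideanSpace.basisFun (Fin n) ℝ).toBasis.span_eq]
        apply Submodule.span_le.mpr
        rintro _ ⟨i, rfl⟩
        rw [OrthonormalBasis.coe_toBasis]
        exact hsingle i
      have hcard : Fintype.card (Fin n) = Module.finrank ℝ (EuclideanSpace ℝ (Fin n)) := by
        simp
      obtain ⟨bU, hbU⟩ : ∃ b : Module.Basis (Fin n) ℝ (EuclideanSpace ℝ (Fin n)), ⇑b = uE :=
        ⟨basisOfTopLeSpanOfCardEqFinrank uE hspanR hcard,
          coe_basisOfTopLeSpanOfCardEqFinrank uE hspanR hcard⟩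
      set γ : Fin n → ℝ := fun k => bU.repr (v jm) k with hγdef
      have hvsum : v jm = ∑ k, γ k • uE k := by
        have h := bU.sum_repr (v jm)
        rw [hbU] at h
        exact h.symm
      have hHfjm : Hf jm = v jm := by simp [hHf, hjm_def]
      clear_value uE Hf γ
      -- find a usable coordinate
      have hex : ∃ i₀ : Fin n, j ≤ (i₀:ℕ) ∧ γ i₀ ≠ 0 := by
        by_contra hcon
        push_neg at hcon
        have hmem : Hf jm ∈ Submodule.span ℝ (Hf '' {i : Fin m | (i:ℕ) < j}) := by
          rw [hHfjm, hvsum]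
          rw [← Finset.sum_filter_of_ne (p := fun k : Fin n => (k:ℕ) < j)
            (fun k _ hne => by
              by_contra hnotlt
              exact hne (by rw [hcon k (by omega)]; simp))]
          apply Submodule.sum_mem
          intro k hk
          rw [Finset.mem_filter] at hk
          apply Submodule.smul_mem
          apply Submodule.subset_span
          refine ⟨⟨(k:ℕ), by omega⟩, by simpa using hk.2, ?_⟩
          have hcast : Fin.castLE hmn.le (⟨(k:ℕ), by omega⟩ : Fin m) = k := by
            apply Fin.ext; simp
          simp only [hHf]
          rw [if_pos (by simpa using hk.2), hcast, huE]
        exact hLI.notMem_span_image (by simp [hjm_def] : jm ∉ {i : Fin m | (i:ℕ) < j}) hmem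
      obtain ⟨i₀, hi₀j, hγ₀⟩ := hex
      have hi1lt : j + 1 < n := by omega
      obtain ⟨i₁, ρ, hi₁i₀, hρj, hcases⟩ :
          ∃ i₁ ρ : Fin n, i₁ ≠ i₀ ∧ j < (ρ:ℕ) ∧
            ((i₀ = jn ∧ i₁ = ρ) ∨ (i₁ = jn ∧ i₀ = ρ)) := by
        rcases eq_or_ne ((i₀:ℕ)) j with h|h
        · refine ⟨⟨j+1, hi1lt⟩, ⟨j+1, hi1lt⟩, ?_, by simp, Or.inl ⟨Fin.ext (by simp [h, hjn_def]), rfl⟩⟩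
          intro hcontra
          rw [Fin.ext_iff] at hcontra
          simp [h] at hcontra
        · refine ⟨jn, i₀, ?_, by omega, Or.inr ⟨rfl, rfl⟩⟩
          intro hcontra
          rw [Fin.ext_iff] at hcontra
          simp [hjn_def] at hcontra
          omega
      have hjnρ : jn ≠ ρ := by
        intro hcontra
        rw [Fin.ext_iff] at hcontra
        simp [hjn_def] at hcontra
        omega
      -- constants
      have hvjm0 : v jm ≠ 0 := hv.ne_zero jm
      have hnv : (0:ℝ) < ‖v jm‖ := norm_pos_iff.mpr hvjm0
      set K : ℝ := (∑ k, ‖uE k‖) + 1 with hKdef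
      have hsumnn : 0 ≤ ∑ k, ‖uE k‖ := Finset.sum_nonneg fun k _ => norm_nonneg _
      have hKpos : 0 < K := by rw [hKdef]; linarith
      obtain ⟨ε, hε, hball⟩ : ∃ ε > 0, ∀ g : Fin m → EuclideanSpace ℝ (Fin n),
          dist g Hf < ε → LinearIndependent ℝ g := by
        obtain ⟨ε, hε, hb⟩ := Metric.isOpen_iff.mp
          (isOpen_setOf_linearIndependent (𝕜 := ℝ) (E := EuclideanSpace ℝ (Fin n))) Hf hLI
        exact ⟨ε, hε, fun g hg => hb (Metric.mem_ball.mpr hg)⟩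
      set M : ℝ := 2*K/ε + 4*K/(δ*‖v jm‖) + 2*K/‖v jm‖ + 1 with hMdef
      have hq1 : 0 < 2*K/ε := div_pos (by linarith) hε
      have hq2 : 0 < 4*K/(δ*‖v jm‖) := div_pos (by linarith) (mul_pos hδ hnv)
      have hq3 : 0 < 2*K/‖v jm‖ := div_pos (by linarith) hnv
      have hM1 : 2*K/ε < M := by rw [hMdef]; linarith
      have hM2 : 4*K/(δ*‖v jm‖) < M := by rw [hMdef]; linarith
      have hM3 : 2*K/‖v jm‖ < M := by rw [hMdef]; linarith
      have hγabs : 0 < |γ i₀| := abs_pos.mpr hγ₀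
      obtain ⟨N₀, hN₀⟩ := exists_nat_ge (|γ i₀| * M)
      obtain ⟨p, hpN, hp⟩ := Nat.exists_infinite_primes (N₀ + 1)
      set t : ℝ := (p:ℝ) / |γ i₀| with htdef
      have hppos : (0:ℝ) < (p:ℝ) := by exact_mod_cast hp.pos
      have ht : 0 < t := div_pos hppos hγabs
      have htM : M ≤ t := by
        rw [htdef, le_div_iff₀ hγabs]
        calc M * |γ i₀| = |γ i₀| * M := mul_comm _ _
          _ ≤ (N₀:ℝ) := hN₀
          _ ≤ (p:ℝ) := by exact_mod_cast (by omega : N₀ ≤ p)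
      clear_value K M t
      -- integer coefficients
      set sft : ℤ := if ((p:ℤ)) ∣ round (t * γ i₁) then 1 else 0 with hsft
      set c : Fin n → ℤ := fun k => if k = i₀ then (if 0 < γ i₀ then ((p:ℤ)) else -((p:ℤ)))
        else if k = i₁ then round (t * γ i₁) + sft else round (t * γ k) with hcdef
      have hpprime : Prime ((p:ℤ)) := Nat.prime_iff_prime_int.mp hp
      have hp2 : (2:ℤ) ≤ ((p:ℤ)) := by exact_mod_cast hp.two_le
      have hci₁ : c i₁ = round (t * γ i₁) + sft := by
        rw [hcdef]
        simp [hi₁i₀]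
      have hpdvd : ¬ ((p:ℤ)) ∣ c i₁ := by
        rw [hci₁, hsft]
        split_ifs with hdv
        · intro hdv2
          have h1 : ((p:ℤ)) ∣ 1 := (dvd_add_right hdv).mp hdv2
          have h2 := Int.le_of_dvd one_pos h1
          linarith
        · simpa using hdv
      have hci₀ : c i₀ = (if 0 < γ i₀ then ((p:ℤ)) else -((p:ℤ))) := by
        rw [hcdef]; simp
      have hcop : IsCoprime (c i₀) (c i₁) := by
        have hbase : IsCoprime ((p:ℤ)) (c i₁) := (hpprime.coprime_iff_not_dvd).mpr hpdvd
        rw [hci₀]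
        split_ifs
        · exact hbase
        · exact hbase.neg_left
      obtain ⟨α, β, hαβ⟩ := hcop
      -- new matrix
      set U' : Fin n → Fin n → ℤ := fun r =>
        if r = jn then (fun i => ∑ k, c k * U k i)
        else if r = ρ then (fun i => (-β) * U i₀ i + α * U i₁ i)
        else U r with hU'def
      have hU'jn : U' jn = fun i => ∑ k, c k * U k i := by rw [hU'def]; simp
      have hU'ρ : U' ρ = fun i => (-β) * U i₀ i + α * U i₁ i := by
        rw [hU'def]; simp [Ne.symm hjnρ, hjnρ]
      have hU'other : ∀ r, r ≠ jn → r ≠ ρ → U' r = U r := by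
        intro r h1 h2
        rw [hU'def]; simp [h1, h2]
      clear_value sft c U'
      -- spanning
      have hspan' : Submodule.span ℤ (Set.range U') = ⊤ := by
        rw [eq_top_iff, ← hspan]
        apply Submodule.span_le.mpr
        rintro _ ⟨r, rfl⟩
        have hY : (fun i => (-β) * U i₀ i + α * U i₁ i) ∈ Submodule.span ℤ (Set.range U') := by
          rw [← hU'ρ]
          exact Submodule.subset_span ⟨ρ, rfl⟩
        have hX : (fun i => c i₀ * U i₀ i + c i₁ * U i₁ i) ∈ Submodule.span ℤ (Set.range U') := by
          have h2 : ∀ k ∈ (Finset.univ.erase i₀).erase i₁, U' k = U k := by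
            intro k hk
            rw [Finset.mem_erase, Finset.mem_erase] at hk
            apply hU'other
            · rcases hcases with ⟨h,-⟩|⟨h,-⟩
              · rw [← h]; exact hk.2.1
              · rw [← h]; exact hk.1
            · rcases hcases with ⟨-,h⟩|⟨-,h⟩
              · rw [← h]; exact hk.1
              · rw [← h]; exact hk.2.1
          have h3 : (fun i => c i₀ * U i₀ i + c i₁ * U i₁ i)
              = U' jn - ∑ k ∈ (Finset.univ.erase i₀).erase i₁, c k • U' k := by
            funext i'
            rw [Pi.sub_apply, Finset.sum_apply, hU'jn]
            rw [Finset.sum_congr rfl (fun k hk => by rw [h2 k hk])]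
            have e1 : ∑ k ∈ (Finset.univ.erase i₀).erase i₁, c k * U k i' + c i₁ * U i₁ i'
                = ∑ k ∈ Finset.univ.erase i₀, c k * U k i' :=
              Finset.sum_erase_add _ _ (Finset.mem_erase.mpr ⟨hi₁i₀, Finset.mem_univ _⟩)
            have e2 : ∑ k ∈ Finset.univ.erase i₀, c k * U k i' + c i₀ * U i₀ i'
                = ∑ k, c k * U k i' := Finset.sum_erase_add _ _ (Finset.mem_univ _)
            have e3 : ∀ k, (c k • U k) i' = c k * U k i' := fun k => rfl
            simp only [Pi.smul_apply, smul_eq_mul]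
            linarith
          rw [h3]
          exact Submodule.sub_mem _ (Submodule.subset_span ⟨jn, rfl⟩)
            (Submodule.sum_mem _ fun k _ =>
              Submodule.smul_mem _ _ (Submodule.subset_span ⟨k, rfl⟩))
        by_cases hri₀ : r = i₀
        · have hcomb : U i₀ = α • (fun i => c i₀ * U i₀ i + c i₁ * U i₁ i)
              + (-(c i₁)) • (fun i => (-β) * U i₀ i + α * U i₁ i) := by
            funext i'
            simp only [Pi.add_apply, Pi.smul_apply, smul_eq_mul]
            linear_combination (-(U i₀ i')) * hαβ
          rw [hri₀, hcomb]
          exact Submodule.add_mem _ (Submodule.smul_mem _ _ hX) (Submodule.smul_mem _ _ hY)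
        by_cases hri₁ : r = i₁
        · have hcomb : U i₁ = β • (fun i => c i₀ * U i₀ i + c i₁ * U i₁ i)
              + (c i₀) • (fun i => (-β) * U i₀ i + α * U i₁ i) := by
            funext i'
            simp only [Pi.add_apply, Pi.smul_apply, smul_eq_mul]
            linear_combination (-(U i₁ i')) * hαβ
          rw [hri₁, hcomb]
          exact Submodule.add_mem _ (Submodule.smul_mem _ _ hX) (Submodule.smul_mem _ _ hY)
        · have hrjn : r ≠ jn := by
            rcases hcases with ⟨h,-⟩|⟨h,-⟩
            · rw [← h]; exact hri₀
            · rw [← h]; exact hri₁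
          have hrρ : r ≠ ρ := by
            rcases hcases with ⟨-,h⟩|⟨-,h⟩
            · rw [← h]; exact hri₁
            · rw [← h]; exact hri₀
          rw [← hU'other r hrjn hrρ]
          exact Submodule.subset_span ⟨r, rfl⟩
      -- the new row as a real vector
      set xN : EuclideanSpace ℝ (Fin n) := toE (U' jn) with hxNdef
      have hxsum : xN = ∑ k, (c k : ℝ) • uE k := by
        rw [hxNdef, hU'jn, toE_sum, huE]
      clear_value xN
      -- coefficient error bound
      have hcoef : ∀ k, |(c k : ℝ) - t * γ k| ≤ 3/2 := by
        intro k
        rcases eq_or_ne k i₀ with hk0|hk0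
        · rw [hk0]
          have htexact : t * γ i₀ = (if 0 < γ i₀ then ((p:ℝ)) else -((p:ℝ))) := by
            rw [htdef]
            split_ifs with hpos
            · rw [abs_of_pos hpos]; field_simp
            · have hneg : γ i₀ < 0 := lt_of_le_of_ne (not_lt.mp hpos) hγ₀
              rw [abs_of_neg hneg]
              field_simp
          rw [hci₀, htexact]
          split_ifs <;> push_cast <;> simp <;> norm_num
        · rcases eq_or_ne k i₁ with hk1|hk1
          · rw [hk1, hci₁]
            have h1 : |((round (t * γ i₁) : ℤ) : ℝ) - t * γ i₁| ≤ 1/2 := by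
              rw [abs_sub_comm]
              exact abs_sub_round (t * γ i₁)
            have h2 : |(sft:ℝ)| ≤ 1 := by
              rw [hsft]
              split_ifs <;> norm_num
            calc |((round (t * γ i₁) + sft : ℤ) : ℝ) - t * γ i₁|
                = |(((round (t * γ i₁) : ℤ) : ℝ) - t * γ i₁) + (sft:ℝ)| := by
                  push_cast; ring_nf
              _ ≤ |((round (t * γ i₁) : ℤ) : ℝ) - t * γ i₁| + |(sft:ℝ)| := abs_add_le _ _
              _ ≤ 3/2 := by linarith
          · have hck : c k = round (t * γ k) := by
              rw [hcdef]
              simp [hk0, hk1]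
            rw [hck]
            have h1 : |((round (t * γ k) : ℤ) : ℝ) - t * γ k| ≤ 1/2 := by
              rw [abs_sub_comm]
              exact abs_sub_round (t * γ k)
            linarith
      have hclose : ‖xN - t • v jm‖ ≤ 2 * K := by
        have hdiff : xN - t • v jm = ∑ k, ((c k : ℝ) - t * γ k) • uE k := by
          rw [hxsum, hvsum, Finset.smul_sum, ← Finset.sum_sub_distrib]
          congr 1
          funext k
          rw [smul_smul, ← sub_smul]
        rw [hdiff]
        calc ‖∑ k, ((c k : ℝ) - t * γ k) • uE k‖
            ≤ ∑ k, ‖((c k : ℝ) - t * γ k) • uE k‖ := norm_sum_le _ _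
          _ = ∑ k, |(c k : ℝ) - t * γ k| * ‖uE k‖ := by
              simp [norm_smul, Real.norm_eq_abs]
          _ ≤ ∑ k, (3/2) * ‖uE k‖ := Finset.sum_le_sum fun k _ =>
              mul_le_mul_of_nonneg_right (hcoef k) (norm_nonneg _)
          _ = (3/2) * ∑ k, ‖uE k‖ := by rw [← Finset.mul_sum]
          _ ≤ 2 * K := by rw [hKdef]; linarith
      have hTne : t • v jm ≠ 0 := smul_ne_zero ht.ne' hvjm0
      have hTnorm : ‖t • v jm‖ = t * ‖v jm‖ := by
        rw [norm_smul, Real.norm_eq_abs, abs_of_pos ht]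
      have htv : 2*K < t * ‖v jm‖ := by
        have h1 : 2*K/‖v jm‖ < t := lt_of_lt_of_le hM3 htM
        calc 2*K = (2*K/‖v jm‖) * ‖v jm‖ := by field_simp
          _ < t * ‖v jm‖ := mul_lt_mul_of_pos_right h1 hnv
      have hxne : xN ≠ 0 := by
        intro h0
        have h1 : ‖t • v jm‖ ≤ 2*K := by
          calc ‖t • v jm‖ = ‖xN - t • v jm‖ := by rw [h0, zero_sub, norm_neg]
            _ ≤ 2*K := hclose
        rw [hTnorm] at h1
        linarith
      have hdistj : projDist xN (v jm) ≤ δ := by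
        rw [← projDist_smul_right xN (v jm) ht]
        refine le_trans (projDist_le_of_close xN (t • v jm) hxne hTne) ?_
        rw [hTnorm]
        have htvpos : 0 < t * ‖v jm‖ := mul_pos ht hnv
        have h1 : 2 * ‖xN - t • v jm‖ / (t * ‖v jm‖) ≤ 2*(2*K)/(t*‖v jm‖) := by
          gcongr
        refine h1.trans ?_
        rw [div_le_iff₀ htvpos]
        have h2 : 4*K/(δ*‖v jm‖) ≤ t := le_trans hM2.le htM
        have h3 : 4*K ≤ t * (δ*‖v jm‖) := (div_le_iff₀ (mul_pos hδ hnv)).mp h2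
        calc 2*(2*K) = 4*K := by ring
          _ ≤ t * (δ*‖v jm‖) := h3
          _ = δ * (t * ‖v jm‖) := by ring
      -- linear independence of the new hybrid family
      set Gf : Fin m → EuclideanSpace ℝ (Fin n) :=
        fun i => if i = jm then t⁻¹ • xN else Hf i with hGfdef
      clear_value Gf
      have hGLI : LinearIndependent ℝ Gf := by
        apply hball
        rw [dist_pi_lt_iff hε]
        intro i
        by_cases hi : i = jm
        · rw [hi]
          have hGfi : Gf jm = t⁻¹ • xN := by rw [hGfdef]; simp
          rw [hGfi, hHfjm, dist_eq_norm]
          have hrw : t⁻¹ • xN - v jm = t⁻¹ • (xN - t • v jm) := by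
            rw [smul_sub, smul_smul, inv_mul_cancel₀ ht.ne', one_smul]
          rw [hrw, norm_smul, Real.norm_eq_abs, abs_of_pos (inv_pos.mpr ht)]
          have h1 : t⁻¹ * ‖xN - t • v jm‖ ≤ t⁻¹ * (2*K) := by gcongr
          have h2 : 2*K/ε < t := lt_of_lt_of_le hM1 htM
          have h3 : 2*K < t * ε := (div_lt_iff₀ hε).mp h2
          have h4 : t⁻¹ * (2*K) < ε := by
            rw [inv_mul_eq_div, div_lt_iff₀ ht]
            calc 2*K < t * ε := h3
              _ = ε * t := mul_comm _ _
          linarith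
        · have hGfi : Gf i = Hf i := by rw [hGfdef]; simp [hi]
          rw [hGfi, dist_self]
          exact hε
      set w : Fin m → ℝˣ := fun i => if i = jm then Units.mk0 t ht.ne' else 1 with hwdef
      clear_value w
      have hLI'' : LinearIndependent ℝ (fun i => (w i : ℝ) • Gf i) := hGLI.units_smul w
      have hcastjm : Fin.castLE hmn.le jm = jn := by
        apply Fin.ext; simp [hjm_def, hjn_def]
      have hfamily : (fun i : Fin m =>
          if (i:ℕ) < j+1 then toE (U' (Fin.castLE hmn.le i)) else v i)
          = fun i => (w i : ℝ) • Gf i := by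
        funext i
        by_cases hi : i = jm
        · rw [hi]
          have h1 : ((jm:ℕ)) < j+1 := by simp [hjm_def]
          rw [if_pos h1, hcastjm]
          have hGfi : Gf jm = t⁻¹ • xN := by rw [hGfdef]; simp
          have hwi : (w jm : ℝ) = t := by rw [hwdef]; simp
          rw [hGfi, hwi, smul_smul, mul_inv_cancel₀ ht.ne', one_smul, hxNdef]
        · have hine : ((i:ℕ)) ≠ j := by
            intro h
            exact hi (Fin.ext (by simp [hjm_def, h]))
          have hwi : (w i : ℝ) = 1 := by rw [hwdef]; simp [hi]
          have hGfi : Gf i = Hf i := by rw [hGfdef]; simp [hi]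
          rw [hwi, one_smul, hGfi]
          by_cases hlt : ((i:ℕ)) < j
          · have h1 : ((i:ℕ)) < j+1 := by omega
            have hne1 : Fin.castLE hmn.le i ≠ jn := by
              intro h
              apply hine
              have := congrArg (fun z : Fin n => (z:ℕ)) h
              simpa [hjn_def] using this
            have hne2 : Fin.castLE hmn.le i ≠ ρ := by
              intro h
              have := congrArg (fun z : Fin n => (z:ℕ)) h
              simp at this
              omega
            rw [if_pos h1, hU'other _ hne1 hne2]
            have hHfi : Hf i = toE (U (Fin.castLE hmn.le i)) := by
              rw [hHf]; simp [hlt]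
            rw [hHfi]
          · have h1 : ¬ (((i:ℕ)) < j+1) := by omega
            rw [if_neg h1]
            have hHfi : Hf i = v i := by rw [hHf]; simp [hlt]
            rw [hHfi]
      refine ⟨U', hspan', ?_, ?_⟩
      · rw [hfamily]
        exact hLI''
      · intro i hi
        by_cases hlt : ((i:ℕ)) < j
        · have hne1 : Fin.castLE hmn.le i ≠ jn := by
            intro h
            have := congrArg (fun z : Fin n => (z:ℕ)) h
            simp [hjn_def] at this
            omega
          have hne2 : Fin.castLE hmn.le i ≠ ρ := by
            intro h
            have := congrArg (fun z : Fin n => (z:ℕ)) h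
            simp at this
            omega
          rw [hU'other _ hne1 hne2]
          exact hdist i hlt
        · have hieq : i = jm := Fin.ext (by simp [hjm_def]; omega)
          subst hieq
          rw [hcastjm, ← hxNdef]
          exact hdistj
end

section
/- Let E_1 = span(e_1,…,e_s) and E_2 = span(e_r,…,e_t) be coordinate subspaces of R^n with r ≤ s (so E_1 ∩ E_2 ≠ {0}). Then every nonzero x ∈ R^n satisfies dist(x, E_1 ∩ E_2) ≤ dist(x, E_1) + dist(x, E_2). -/
open scoped BigOperators

variable {n : ℕ}

def coordSub (p : Fin n → Prop) [DecidablePred p] :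
    Submodule ℝ (EuclideanSpace ℝ (Fin n)) where
  carrier := {x | ∀ i, ¬ p i → x i = 0}
  add_mem' := by
    intro a b ha hb i hi
    have : (a + b) i = a i + b i := rfl
    rw [this, ha i hi, hb i hi, add_zero]
  zero_mem' := by intro i hi; rfl
  smul_mem' := by
    intro c a ha i hi
    have : (c • a) i = c * a i := rfl
    rw [this, ha i hi, mul_zero]

noncomputable def maskv (p : Fin n → Prop) [DecidablePred p]
    (x : EuclideanSpace ℝ (Fin n)) : EuclideanSpace ℝ (Fin n) :=
  (WithLp.equiv 2 (Fin n → ℝ)).symm (fun i => if p i then x i else 0)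

lemma maskv_apply (p : Fin n → Prop) [DecidablePred p] (x : EuclideanSpace ℝ (Fin n)) (i : Fin n) :
    maskv p x i = if p i then x i else 0 := rfl

lemma maskv_mem (p : Fin n → Prop) [DecidablePred p] (x : EuclideanSpace ℝ (Fin n)) :
    maskv p x ∈ coordSub p := by
  intro i hi
  simp [maskv_apply, hi]

lemma proj_coordSub (p : Fin n → Prop) [DecidablePred p] (x : EuclideanSpace ℝ (Fin n)) :
    (Submodule.orthogonalProjectionOnto (coordSub p) x : EuclideanSpace ℝ (Fin n)) = maskv p x := by
  apply Submodule.eq_starProjection_of_mem_of_inner_eq_zero (maskv_mem p x)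
  intro w hw
  rw [PiLp.inner_apply]
  apply Finset.sum_eq_zero
  intro i _
  by_cases hi : p i
  · have : (x - maskv p x) i = x i - maskv p x i := rfl
    simp [this, maskv_apply, hi]
  · simp [hw i hi]

lemma norm_proj_orth_coordSub (p : Fin n → Prop) [DecidablePred p]
    (x : EuclideanSpace ℝ (Fin n)) :
    ‖(Submodule.orthogonalProjectionOnto (coordSub p)ᗮ x : EuclideanSpace ℝ (Fin n))‖
      = Real.sqrt (∑ i, if p i then 0 else (x i)^2) := by
  rw [Submodule.orthogonalProjectionOnto_orthogonal, Submodule.coe_mk,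
    show (coordSub p).starProjection x = maskv p x from proj_coordSub p x, EuclideanSpace.norm_eq]
  congr 1
  apply Finset.sum_congr rfl
  intro i _
  have : (x - maskv p x) i = x i - maskv p x i := rfl
  by_cases hi : p i <;>
    simp [this, maskv_apply, hi, sq_abs, pow_two]

lemma span_single_eq (p : Fin n → Prop) [DecidablePred p] :
    Submodule.span ℝ
      ((fun i : Fin n => EuclideanSpace.single i (1 : ℝ)) '' {i : Fin n | p i})
      = coordSub p := by
  apply le_antisymm
  · rw [Submodule.span_le]
    rintro _ ⟨i, hi, rfl⟩
    intro j hj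
    have hij : j ≠ i := fun h => hj (h ▸ hi)
    simp [EuclideanSpace.single_apply, hij]
  · intro x hx
    have hxsum : x = ∑ i ∈ Finset.univ.filter p, x i • EuclideanSpace.single i (1 : ℝ) := by
      ext j
      rw [show (∑ i ∈ Finset.univ.filter p, x i • EuclideanSpace.single i (1:ℝ)) j
            = ∑ i ∈ Finset.univ.filter p, (x i • EuclideanSpace.single i (1:ℝ)) j
          from by rw [WithLp.ofLp_sum, Finset.sum_apply]]
      by_cases hj : p j
      · rw [Finset.sum_eq_single j]
        · simp [EuclideanSpace.single_apply]
        · intro b _ hb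
          simp [EuclideanSpace.single_apply, hb.symm]
        · intro h; exact absurd (Finset.mem_filter.2 ⟨Finset.mem_univ _, hj⟩) h
      · rw [hx j hj]
        apply (Finset.sum_eq_zero _).symm
        intro b hb
        have : j ≠ b := fun h => hj (h ▸ (Finset.mem_filter.1 hb).2)
        simp [EuclideanSpace.single_apply, this]
    rw [hxsum]
    apply Submodule.sum_mem
    intro i hi
    exact Submodule.smul_mem _ _ (Submodule.subset_span ⟨i, (Finset.mem_filter.1 hi).2, rfl⟩)

lemma coordSub_inf (p q : Fin n → Prop) [DecidablePred p] [DecidablePred q] :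
    coordSub p ⊓ coordSub q = coordSub (fun i => p i ∧ q i) := by
  apply le_antisymm
  · rintro x ⟨h1, h2⟩ i hi
    by_cases hp : p i
    · exact h2 i (fun hq => hi ⟨hp, hq⟩)
    · exact h1 i hp
  · intro x hx
    exact ⟨fun i hi => hx i (fun h => hi h.1), fun i hi => hx i (fun h => hi h.2)⟩

lemma sqrt_add_le' {a b : ℝ} (ha : 0 ≤ a) (hb : 0 ≤ b) :
    Real.sqrt (a + b) ≤ Real.sqrt a + Real.sqrt b := by
  rw [show a + b = a + b from rfl]
  have h := Real.sq_sqrt ha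
  have h2 := Real.sq_sqrt hb
  have h3 := Real.sqrt_nonneg a
  have h4 := Real.sqrt_nonneg b
  nlinarith [Real.sq_sqrt (by linarith : (0:ℝ) ≤ a + b), Real.sqrt_nonneg (a+b),
    mul_nonneg h3 h4]

theorem stmt5 {n r s t : ℕ} (hr : 1 ≤ r) (hrs : r ≤ s) (hsn : s ≤ n)
    (hrt : r ≤ t) (htn : t ≤ n)
    (E₁ E₂ : Submodule ℝ (EuclideanSpace ℝ (Fin n)))
    (hE₁ : E₁ = Submodule.span ℝ
      ((fun i : Fin n => EuclideanSpace.single i (1 : ℝ)) '' {i : Fin n | (i : ℕ) < s}))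
    (hE₂ : E₂ = Submodule.span ℝ
      ((fun i : Fin n => EuclideanSpace.single i (1 : ℝ)) ''
        {i : Fin n | r ≤ (i : ℕ) + 1 ∧ (i : ℕ) + 1 ≤ t})) :
    ∀ x : EuclideanSpace ℝ (Fin n), x ≠ 0 →
      distToSub x (E₁ ⊓ E₂) ≤ distToSub x E₁ + distToSub x E₂ := by
  intro x hx
  set p : Fin n → Prop := fun i => (i : ℕ) < s with hp
  set q : Fin n → Prop := fun i => r ≤ (i : ℕ) + 1 ∧ (i : ℕ) + 1 ≤ t with hq
  have h1 : E₁ = coordSub p := by rw [hE₁]; exact span_single_eq p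
  have h2 : E₂ = coordSub q := by rw [hE₂]; exact span_single_eq q
  have h12 : E₁ ⊓ E₂ = coordSub (fun i => p i ∧ q i) := by
    rw [h1, h2, coordSub_inf]
  unfold distToSub
  rw [h1, h2, coordSub_inf, norm_proj_orth_coordSub, norm_proj_orth_coordSub,
    norm_proj_orth_coordSub]
  set A := ∑ i, if p i ∧ q i then 0 else (x i)^2 with hA
  set B := ∑ i, if p i then 0 else (x i)^2 with hB
  set C := ∑ i, if q i then 0 else (x i)^2 with hC
  have hAnn : 0 ≤ A := Finset.sum_nonneg (fun i _ => by positivity)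
  have hBnn : 0 ≤ B := Finset.sum_nonneg (fun i _ => by positivity)
  have hCnn : 0 ≤ C := Finset.sum_nonneg (fun i _ => by positivity)
  have hABC : A ≤ B + C := by
    rw [hA, hB, hC, ← Finset.sum_add_distrib]
    apply Finset.sum_le_sum
    intro i _
    by_cases hpi : p i <;> by_cases hqi : q i <;> simp [hpi, hqi] <;> positivity
  have hsqrt : Real.sqrt A ≤ Real.sqrt B + Real.sqrt C :=
    le_trans (Real.sqrt_le_sqrt hABC) (sqrt_add_le' hBnn hCnn)
  have hxpos : 0 < ‖x‖ := norm_pos_iff.2 hx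
  calc Real.sqrt A / ‖x‖ ≤ (Real.sqrt B + Real.sqrt C) / ‖x‖ := by gcongr
    _ = Real.sqrt B / ‖x‖ + Real.sqrt C / ‖x‖ := add_div _ _ _
end

section
/- Let v = (v_1,…,v_m) be a linearly independent m-tuple of vectors of R^n with 1 ≤ m ≤ n, and set Θ(v) = ‖v_1∧⋯∧v_m‖/(‖v_1‖⋯‖v_m‖). Let 0 ≤ δ < Θ(v)/(2m), and let x = (x_1,…,x_m) be an m-tuple of nonzero vectors of R^n with dist(x_j, v_j) ≤ δ for each j. Then x is linearly independent over R and |Θ(x) − Θ(v)| ≤ 2mδ. -/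
open scoped BigOperators

namespace Stmt6Aux

open Finset Matrix

variable {n : ℕ}

noncomputable def gram {M : ℕ} (w : Fin M → EuclideanSpace ℝ (Fin n)) :
    Matrix (Fin M) (Fin M) ℝ := Matrix.of fun i j => (inner ℝ (w i) (w j) : ℝ)

noncomputable def gVol {M : ℕ} (w : Fin M → EuclideanSpace ℝ (Fin n)) : ℝ :=
  Real.sqrt (gram w).det

lemma gVol_nonneg {M : ℕ} (w : Fin M → EuclideanSpace ℝ (Fin n)) : 0 ≤ gVol w :=
  Real.sqrt_nonneg _

lemma gram_conj {M : ℕ} (w w' : Fin M → EuclideanSpace ℝ (Fin n))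
    (A : Matrix (Fin M) (Fin M) ℝ) (h : ∀ i, w' i = ∑ k, A i k • w k) :
    gram w' = A * gram w * Aᵀ := by
  ext i j
  simp only [gram, Matrix.of_apply, Matrix.mul_apply, Matrix.transpose_apply, h,
    sum_inner, inner_sum, real_inner_smul_left, real_inner_smul_right]
  simp only [Finset.mul_sum, Finset.sum_mul]
  exact Finset.sum_congr rfl fun k _ => Finset.sum_congr rfl fun l _ => by ring

lemma gram_det_conj {M : ℕ} (w w' : Fin M → EuclideanSpace ℝ (Fin n))
    (A : Matrix (Fin M) (Fin M) ℝ) (h : ∀ i, w' i = ∑ k, A i k • w k) :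
    (gram w').det = A.det ^ 2 * (gram w).det := by
  rw [gram_conj w w' A h, Matrix.det_mul, Matrix.det_mul, Matrix.det_transpose]; ring

lemma gVol_smul {M : ℕ} (w : Fin M → EuclideanSpace ℝ (Fin n)) (c : Fin M → ℝ) :
    gVol (fun i => c i • w i) = |∏ i, c i| * gVol w := by
  have h : ∀ i, c i • w i = ∑ k, (Matrix.diagonal c) i k • w k := by
    intro i
    rw [Finset.sum_eq_single i]
    · simp
    · intro k _ hk
      simp [Matrix.diagonal_apply_ne' _ hk]
    · intro h; exact absurd (Finset.mem_univ _) h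
  rw [gVol, gVol, gram_det_conj w _ _ h, Matrix.det_diagonal,
    Real.sqrt_mul (sq_nonneg _), Real.sqrt_sq_eq_abs]

lemma gVol_comp_perm {M : ℕ} (w : Fin M → EuclideanSpace ℝ (Fin n)) (e : Equiv.Perm (Fin M)) :
    gVol (w ∘ e) = gVol w := by
  have h : gram (w ∘ e) = (gram w).submatrix e e := rfl
  rw [gVol, gVol, h, Matrix.det_submatrix_equiv_self]


lemma gram_det_split {M : ℕ} (w : Fin (M+1) → EuclideanSpace ℝ (Fin n)) :
    (gram w).det
      = ‖(Submodule.orthogonalProjectionOnto (Submodule.span ℝ (Set.range (Fin.init w)))ᗮ (w (Fin.last M))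
          : EuclideanSpace ℝ (Fin n))‖ ^ 2 * (gram (Fin.init w)).det := by
  classical
  set F : Fin M → EuclideanSpace ℝ (Fin n) := Fin.init w with hF
  set V : Submodule ℝ (EuclideanSpace ℝ (Fin n)) := Submodule.span ℝ (Set.range F) with hV
  set p : EuclideanSpace ℝ (Fin n) :=
    (Submodule.orthogonalProjectionOnto Vᗮ (w (Fin.last M)) : EuclideanSpace ℝ (Fin n)) with hp
  have hpmem : p ∈ Vᗮ := SetLike.coe_mem _
  have hq : w (Fin.last M) - p ∈ V := by
    have h := Submodule.starProjection_add_starProjection_orthogonal (K := V) (w (Fin.last M))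
    have h2 : w (Fin.last M) - p = (Submodule.orthogonalProjectionOnto V (w (Fin.last M)) :
        EuclideanSpace ℝ (Fin n)) := by
      rw [sub_eq_iff_eq_add]
      exact h.symm
    rw [h2]; exact SetLike.coe_mem _
  obtain ⟨c, hc⟩ := (Submodule.mem_span_range_iff_exists_fun ℝ).mp hq
  set A : Matrix (Fin (M+1)) (Fin (M+1)) ℝ :=
    Fin.snoc (fun i => Pi.single (Fin.castSucc i) 1) (Fin.snoc (fun k => -c k) 1) with hA
  have hrow : ∀ i, (Fin.snoc F p : Fin (M+1) → EuclideanSpace ℝ (Fin n)) i = ∑ k, A i k • w k := by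
    intro i
    induction i using Fin.lastCases with
    | last =>
      rw [Fin.snoc_last, hA]
      rw [Fin.sum_univ_castSucc]
      simp only [Fin.snoc_castSucc, Fin.snoc_last, one_smul, neg_smul]
      have h2 : ∑ k : Fin M, -(c k • w (Fin.castSucc k)) = -(w (Fin.last M) - p) := by
        rw [← hc, ← Finset.sum_neg_distrib]
        rfl
      rw [h2]; abel
    | cast i =>
      rw [Fin.snoc_castSucc, hA]
      simp only [Fin.snoc_castSucc]
      rw [Finset.sum_eq_single (Fin.castSucc i)]
      · simp only [Pi.single_eq_same, one_smul]; rfl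
      · intro k _ hk
        rw [Pi.single_eq_of_ne hk, zero_smul]
      · intro h; exact absurd (Finset.mem_univ _) h
  have hdetA : A.det = 1 := by
    rw [Matrix.det_of_lowerTriangular A ?_]
    · apply Finset.prod_eq_one
      intro i _
      induction i using Fin.lastCases with
      | last => simp [hA]
      | cast i => simp [hA]
    · intro i j hij
      have hij' : i < j := hij
      induction i using Fin.lastCases with
      | last => exact absurd hij' (not_lt.mpr (Fin.le_last j))
      | cast i =>
        simp only [hA, Fin.snoc_castSucc]
        exact Pi.single_eq_of_ne (ne_of_gt hij') 1
  have hdet1 : (gram (Fin.snoc F p)).det = (gram w).det := by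
    rw [gram_det_conj w _ A hrow, hdetA]; ring
  have hblock : (gram (Fin.snoc F p)).det = ‖p‖^2 * (gram F).det := by
    rw [Matrix.det_succ_row (gram (Fin.snoc F p)) (Fin.last M)]
    rw [Finset.sum_eq_single (Fin.last M)]
    · have h1 : gram (Fin.snoc F p) (Fin.last M) (Fin.last M) = ‖p‖^2 := by
        show (inner ℝ ((Fin.snoc F p : Fin (M+1) → EuclideanSpace ℝ (Fin n)) (Fin.last M))
          ((Fin.snoc F p : Fin (M+1) → EuclideanSpace ℝ (Fin n)) (Fin.last M)) : ℝ) = _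
        rw [Fin.snoc_last]
        exact real_inner_self_eq_norm_sq p
      have h2 : (gram (Fin.snoc F p)).submatrix (Fin.last M).succAbove (Fin.last M).succAbove
          = gram F := by
        rw [Fin.succAbove_last]
        ext i j
        simp [gram, Matrix.submatrix_apply]
      rw [h1, h2]
      have h3 : ((-1 : ℝ))^((Fin.last M : ℕ) + (Fin.last M : ℕ)) = 1 := by
        rw [Fin.val_last]
        exact Even.neg_one_pow ⟨M, rfl⟩
      rw [h3]; ring
    · intro j _ hj
      have h0 : gram (Fin.snoc F p) (Fin.last M) j = 0 := by
        induction j using Fin.lastCases with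
        | last => exact absurd rfl hj
        | cast j0 =>
          have hFj : F j0 ∈ V := Submodule.subset_span ⟨j0, rfl⟩
          have h1 : (inner ℝ (F j0) p : ℝ) = 0 := (Submodule.mem_orthogonal V p).mp hpmem _ hFj
          show (inner ℝ ((Fin.snoc F p : Fin (M+1) → EuclideanSpace ℝ (Fin n)) (Fin.last M))
            ((Fin.snoc F p : Fin (M+1) → EuclideanSpace ℝ (Fin n)) (Fin.castSucc j0)) : ℝ) = 0
          rw [Fin.snoc_last, Fin.snoc_castSucc, real_inner_comm]
          exact h1
      rw [h0]; ring
    · intro h; exact absurd (Finset.mem_univ _) h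
  rw [← hdet1, hblock]


lemma norm_proj_le (V : Submodule ℝ (EuclideanSpace ℝ (Fin n))) (z : EuclideanSpace ℝ (Fin n)) :
    ‖(Submodule.orthogonalProjectionOnto V z : EuclideanSpace ℝ (Fin n))‖ ≤ ‖z‖ := by
  calc ‖(Submodule.orthogonalProjectionOnto V z : EuclideanSpace ℝ (Fin n))‖
      = ‖Submodule.orthogonalProjectionOnto V z‖ := rfl
    _ ≤ ‖Submodule.orthogonalProjectionOnto V‖ * ‖z‖ := (Submodule.orthogonalProjectionOnto V).le_opNorm z
    _ ≤ 1 * ‖z‖ := mul_le_mul_of_nonneg_right (Submodule.orthogonalProjectionOnto_norm_le V) (norm_nonneg z)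
    _ = ‖z‖ := one_mul _

lemma gVol_split {M : ℕ} (w : Fin (M+1) → EuclideanSpace ℝ (Fin n)) :
    gVol w = ‖(Submodule.orthogonalProjectionOnto (Submodule.span ℝ (Set.range (Fin.init w)))ᗮ (w (Fin.last M))
        : EuclideanSpace ℝ (Fin n))‖ * gVol (Fin.init w) := by
  rw [gVol, gVol, gram_det_split, Real.sqrt_mul (sq_nonneg _), Real.sqrt_sq (norm_nonneg _)]

lemma gVol_le_prod : ∀ {M : ℕ} (w : Fin M → EuclideanSpace ℝ (Fin n)), gVol w ≤ ∏ i, ‖w i‖ := by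
  intro M
  induction M with
  | zero =>
    intro w
    simp [gVol, Matrix.det_fin_zero]
  | succ M ih =>
    intro w
    rw [gVol_split, Fin.prod_univ_castSucc]
    have h1 := norm_proj_le (Submodule.span ℝ (Set.range (Fin.init w)))ᗮ (w (Fin.last M))
    have h2 : gVol (Fin.init w) ≤ ∏ i : Fin M, ‖w (Fin.castSucc i)‖ := ih (Fin.init w)
    calc ‖(Submodule.orthogonalProjectionOnto (Submodule.span ℝ (Set.range (Fin.init w)))ᗮ (w (Fin.last M))
          : EuclideanSpace ℝ (Fin n))‖ * gVol (Fin.init w)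
        ≤ ‖w (Fin.last M)‖ * ∏ i : Fin M, ‖w (Fin.castSucc i)‖ :=
          mul_le_mul h1 h2 (gVol_nonneg _) (norm_nonneg _)
      _ = (∏ i : Fin M, ‖w (Fin.castSucc i)‖) * ‖w (Fin.last M)‖ := mul_comm _ _

lemma slot_last {M : ℕ} (w : Fin (M+1) → EuclideanSpace ℝ (Fin n)) (a b : EuclideanSpace ℝ (Fin n))
    (hw : ∀ i : Fin M, ‖w (Fin.castSucc i)‖ ≤ 1) :
    |gVol (Function.update w (Fin.last M) a) - gVol (Function.update w (Fin.last M) b)|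
      ≤ ‖a - b‖ := by
  classical
  have hinit : ∀ z : EuclideanSpace ℝ (Fin n),
      Fin.init (Function.update w (Fin.last M) z) = Fin.init w := by
    intro z; funext i
    show Function.update w (Fin.last M) z (Fin.castSucc i) = w (Fin.castSucc i)
    exact Function.update_of_ne (Fin.castSucc_lt_last i).ne (z) w
  set V := (Submodule.span ℝ (Set.range (Fin.init w)))ᗮ with hVd
  have key : ∀ z : EuclideanSpace ℝ (Fin n), gVol (Function.update w (Fin.last M) z)
      = ‖(Submodule.orthogonalProjectionOnto V z : EuclideanSpace ℝ (Fin n))‖ * gVol (Fin.init w) := by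
    intro z
    rw [gVol_split, hinit, Function.update_self]
  rw [key a, key b, ← sub_mul, abs_mul, abs_of_nonneg (gVol_nonneg _)]
  have hPab : |‖(Submodule.orthogonalProjectionOnto V a : EuclideanSpace ℝ (Fin n))‖
      - ‖(Submodule.orthogonalProjectionOnto V b : EuclideanSpace ℝ (Fin n))‖| ≤ ‖a - b‖ := by
    calc |‖(Submodule.orthogonalProjectionOnto V a : EuclideanSpace ℝ (Fin n))‖
        - ‖(Submodule.orthogonalProjectionOnto V b : EuclideanSpace ℝ (Fin n))‖|
        ≤ ‖(Submodule.orthogonalProjectionOnto V a : EuclideanSpace ℝ (Fin n))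
            - (Submodule.orthogonalProjectionOnto V b : EuclideanSpace ℝ (Fin n))‖ := abs_norm_sub_norm_le _ _
      _ = ‖(Submodule.orthogonalProjectionOnto V (a - b) : EuclideanSpace ℝ (Fin n))‖ := by
          rw [map_sub]; rfl
      _ ≤ ‖a - b‖ := norm_proj_le V (a - b)
  have hg1 : gVol (Fin.init w) ≤ 1 := by
    refine le_trans (gVol_le_prod _) (Finset.prod_le_one (fun i _ => norm_nonneg _) ?_)
    intro i _
    exact hw i
  calc |‖(Submodule.orthogonalProjectionOnto V a : EuclideanSpace ℝ (Fin n))‖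
      - ‖(Submodule.orthogonalProjectionOnto V b : EuclideanSpace ℝ (Fin n))‖| * gVol (Fin.init w)
      ≤ ‖a - b‖ * 1 := mul_le_mul hPab hg1 (gVol_nonneg _) (norm_nonneg _)
    _ = ‖a - b‖ := mul_one _

lemma slot {M : ℕ} (w : Fin (M+1) → EuclideanSpace ℝ (Fin n)) (j : Fin (M+1))
    (a b : EuclideanSpace ℝ (Fin n)) (hw : ∀ i, i ≠ j → ‖w i‖ ≤ 1) :
    |gVol (Function.update w j a) - gVol (Function.update w j b)| ≤ ‖a - b‖ := by
  classical
  set e := Equiv.swap j (Fin.last M) with he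
  have hcomp : ∀ z : EuclideanSpace ℝ (Fin n),
      (Function.update w j z) ∘ e = Function.update (w ∘ e) (Fin.last M) z := by
    intro z; funext i
    rcases eq_or_ne i (Fin.last M) with rfl | hi
    · show Function.update w j z (e (Fin.last M)) = _
      rw [Function.update_self, he, Equiv.swap_apply_right, Function.update_self]
    · have h1 : e i ≠ j := by
        intro h
        apply hi
        have := congrArg e h
        rwa [Equiv.swap_apply_self, he, Equiv.swap_apply_left] at this
      show Function.update w j z (e i) = Function.update (w ∘ e) (Fin.last M) z i
      rw [Function.update_of_ne h1, Function.update_of_ne hi]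
      rfl
  have hlast : ∀ i : Fin M, ‖(w ∘ e) (Fin.castSucc i)‖ ≤ 1 := by
    intro i
    apply hw
    intro h
    have := congrArg e h
    rw [Equiv.swap_apply_self, he, Equiv.swap_apply_left] at this
    exact (Fin.castSucc_lt_last i).ne this
  calc |gVol (Function.update w j a) - gVol (Function.update w j b)|
      = |gVol ((Function.update w j a) ∘ e) - gVol ((Function.update w j b) ∘ e)| := by
        rw [gVol_comp_perm _ e, gVol_comp_perm _ e]
    _ = |gVol (Function.update (w ∘ e) (Fin.last M) a)
        - gVol (Function.update (w ∘ e) (Fin.last M) b)| := by rw [hcomp, hcomp]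
    _ ≤ ‖a - b‖ := slot_last (w ∘ e) a b hlast

lemma linearIndependent_of_gram {M : ℕ} (w : Fin M → EuclideanSpace ℝ (Fin n))
    (h : (gram w).det ≠ 0) : LinearIndependent ℝ w := by
  classical
  by_contra hli
  apply h
  rw [← Matrix.exists_mulVec_eq_zero_iff]
  obtain ⟨g, hg, i, hgi⟩ := Fintype.not_linearIndependent_iff.mp hli
  refine ⟨g, fun h0 => hgi (congrFun h0 i), ?_⟩
  funext i'
  have : ((gram w).mulVec g) i' = (inner ℝ (w i') (∑ j, g j • w j) : ℝ) := by
    rw [inner_sum]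
    simp only [Matrix.mulVec, dotProduct, gram, Matrix.of_apply,
      real_inner_smul_right]
    exact Finset.sum_congr rfl fun k _ => mul_comm _ _
  rw [this, hg, inner_zero_right]
  rfl

end Stmt6Aux

set_option maxHeartbeats 1000000 in
theorem stmt6 {m n : ℕ} (hm : 1 ≤ m) (hmn : m ≤ n)
    (v : Fin m → EuclideanSpace ℝ (Fin n)) (hv : LinearIndependent ℝ v)
    (δ : ℝ) (hδ0 : 0 ≤ δ) (hδ : δ < Theta v / (2 * m))
    (x : Fin m → EuclideanSpace ℝ (Fin n)) (hx : ∀ j, x j ≠ 0)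
    (hdx : ∀ j, projDist (x j) (v j) ≤ δ) :
    LinearIndependent ℝ x ∧ |Theta x - Theta v| ≤ 2 * m * δ := by
  classical
  obtain ⟨M, rfl⟩ := Nat.exists_eq_succ_of_ne_zero (by omega : m ≠ 0)
  have hvne : ∀ j, v j ≠ 0 := fun j => hv.ne_zero j
  have hvnorm : ∀ j, (0:ℝ) < ‖v j‖ := fun j => norm_pos_iff.mpr (hvne j)
  have hxnorm : ∀ j, (0:ℝ) < ‖x j‖ := fun j => norm_pos_iff.mpr (hx j)
  set σ : Fin (M+1) → ℝ := fun j => if (inner ℝ (x j) (v j) : ℝ) < 0 then -1 else 1 with hσdef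
  have hσcase : ∀ j, σ j = -1 ∨ σ j = 1 := by
    intro j
    by_cases h : (inner ℝ (x j) (v j) : ℝ) < 0
    · left; simp only [hσdef]; rw [if_pos h]
    · right; simp only [hσdef]; rw [if_neg h]
  have hσ1 : ∀ j, |σ j| = 1 := by
    intro j
    rcases hσcase j with h | h <;> rw [h] <;> norm_num
  have hσ0 : ∀ j, σ j ≠ 0 := by
    intro j h
    have := hσ1 j
    rw [h, abs_zero] at this
    norm_num at this
  set u : Fin (M+1) → EuclideanSpace ℝ (Fin n) := fun j => ‖v j‖⁻¹ • v j with hudef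
  set y : Fin (M+1) → EuclideanSpace ℝ (Fin n) := fun j => (σ j * ‖x j‖⁻¹) • x j with hydef
  have hunorm : ∀ j, ‖u j‖ = 1 := by
    intro j
    rw [hudef]
    simp only [norm_smul, norm_inv, norm_norm]
    exact inv_mul_cancel₀ (ne_of_gt (hvnorm j))
  have hynorm : ∀ j, ‖y j‖ = 1 := by
    intro j
    rw [hydef]
    simp only [norm_smul, norm_mul, norm_inv, norm_norm, Real.norm_eq_abs, hσ1 j, one_mul,
      abs_norm]
    exact inv_mul_cancel₀ (ne_of_gt (hxnorm j))
  -- Theta in terms of gVol of normalized tuples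
  have hgram : ∀ (w : Fin (M+1) → EuclideanSpace ℝ (Fin n)), gramVol w = Stmt6Aux.gVol w :=
    fun w => rfl
  have hΘv : Theta v = Stmt6Aux.gVol u := by
    rw [Theta, hgram, hudef]
    rw [show (fun j => ‖v j‖⁻¹ • v j) = (fun j => (fun i => ‖v i‖⁻¹) j • v j) from rfl]
    rw [Stmt6Aux.gVol_smul]
    rw [abs_of_nonneg (Finset.prod_nonneg fun i _ => inv_nonneg.mpr (norm_nonneg _))]
    rw [Finset.prod_inv_distrib, div_eq_inv_mul]
  have hΘx : Theta x = Stmt6Aux.gVol y := by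
    rw [Theta, hgram, hydef]
    rw [show (fun j => (σ j * ‖x j‖⁻¹) • x j) = (fun j => (fun i => σ i * ‖x i‖⁻¹) j • x j)
      from rfl]
    rw [Stmt6Aux.gVol_smul, Finset.abs_prod]
    have : ∀ j : Fin (M+1), |σ j * ‖x j‖⁻¹| = ‖x j‖⁻¹ := by
      intro j
      rw [abs_mul, hσ1 j, one_mul, abs_of_nonneg (inv_nonneg.mpr (norm_nonneg _))]
    rw [Finset.prod_congr rfl fun j _ => this j, Finset.prod_inv_distrib, div_eq_inv_mul]
  -- distance bound
  have hyu : ∀ j, ‖y j - u j‖ ≤ 2 * δ := by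
    intro j
    have ha := hxnorm j
    have hb := hvnorm j
    set t : ℝ := (inner ℝ (x j) (v j) : ℝ) with htdef
    have hCS : |t| ≤ ‖x j‖ * ‖v j‖ := abs_real_inner_le_norm _ _
    have hab : (0:ℝ) < ‖x j‖ * ‖v j‖ := mul_pos ha hb
    have h0 : 0 ≤ ‖x j‖^2 * ‖v j‖^2 - t^2 := by nlinarith [abs_nonneg t, sq_abs t]
    have h2 : Real.sqrt (‖x j‖^2 * ‖v j‖^2 - t^2) ≤ δ * (‖x j‖ * ‖v j‖) := by
      have h := hdx j
      rw [projDist, div_le_iff₀ hab] at h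
      exact h
    have h3 : ‖x j‖^2 * ‖v j‖^2 - t^2 ≤ (δ * (‖x j‖ * ‖v j‖))^2 := by
      calc ‖x j‖^2 * ‖v j‖^2 - t^2 = Real.sqrt (‖x j‖^2 * ‖v j‖^2 - t^2)^2 :=
            (Real.sq_sqrt h0).symm
        _ ≤ (δ * (‖x j‖ * ‖v j‖))^2 := by
            apply pow_le_pow_left₀ (Real.sqrt_nonneg _) h2
    have h4 : ‖x j‖ * ‖v j‖ - |t| ≤ δ^2 * (‖x j‖ * ‖v j‖) := by
      nlinarith [sq_abs t, abs_nonneg t]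
    have ha' : ‖x j‖ ≠ 0 := ne_of_gt ha
    have hb' : ‖v j‖ ≠ 0 := ne_of_gt hb
    have hinner : (inner ℝ (y j) (u j) : ℝ) = |t| / (‖x j‖ * ‖v j‖) := by
      have hyj : y j = (σ j * ‖x j‖⁻¹) • x j := rfl
      have huj : u j = ‖v j‖⁻¹ • v j := rfl
      rw [hyj, huj, real_inner_smul_left, real_inner_smul_right, ← htdef]
      by_cases ht : t < 0
      · have hσj : σ j = -1 := by simp only [hσdef]; rw [← htdef, if_pos ht]
        rw [hσj, abs_of_neg ht, eq_div_iff (ne_of_gt hab)]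
        field_simp
      · have hσj : σ j = 1 := by simp only [hσdef]; rw [← htdef, if_neg ht]
        rw [hσj, abs_of_nonneg (not_lt.mp ht), eq_div_iff (ne_of_gt hab)]
        field_simp
    have h5 : ‖y j - u j‖^2 ≤ (2*δ)^2 := by
      rw [norm_sub_sq_real, hynorm j, hunorm j, hinner]
      have h6 : 1 - δ^2 ≤ |t| / (‖x j‖ * ‖v j‖) := by
        rw [le_div_iff₀ hab]
        nlinarith
      nlinarith
    calc ‖y j - u j‖ = Real.sqrt (‖y j - u j‖^2) := (Real.sqrt_sq (norm_nonneg _)).symm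
      _ ≤ Real.sqrt ((2*δ)^2) := Real.sqrt_le_sqrt h5
      _ = 2*δ := Real.sqrt_sq (by positivity)
  -- telescoping
  set T : ℕ → Fin (M+1) → EuclideanSpace ℝ (Fin n) := fun k j => if (j : ℕ) < k then y j else u j
    with hTdef
  have hT0 : T 0 = u := funext fun j => if_neg (Nat.not_lt_zero _)
  have hTm : T (M+1) = y := funext fun j => if_pos j.isLt
  have hTnorm : ∀ k (i : Fin (M+1)), ‖T k i‖ ≤ 1 := by
    intro k i
    show ‖if (i:ℕ) < k then y i else u i‖ ≤ 1
    by_cases h : (i:ℕ) < k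
    · rw [if_pos h]; exact le_of_eq (hynorm i)
    · rw [if_neg h]; exact le_of_eq (hunorm i)
  have hstep : ∀ k, k < (M+1) → |Stmt6Aux.gVol (T (k+1)) - Stmt6Aux.gVol (T k)| ≤ 2*δ := by
    intro k hk
    have e1 : T (k+1) = Function.update (T k) ⟨k, hk⟩ (y ⟨k, hk⟩) := by
      funext j
      rcases eq_or_ne j ⟨k, hk⟩ with rfl | hj
      · rw [Function.update_self]
        show (if ((⟨k, hk⟩ : Fin (M+1)) : ℕ) < k + 1 then y ⟨k, hk⟩ else u ⟨k, hk⟩) = y ⟨k, hk⟩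
        exact if_pos (Nat.lt_succ_self k)
      · rw [Function.update_of_ne hj]
        show (if (j:ℕ) < k + 1 then y j else u j) = (if (j:ℕ) < k then y j else u j)
        have hne : (j:ℕ) ≠ k := fun h => hj (Fin.ext h)
        by_cases h2 : (j:ℕ) < k
        · rw [if_pos h2, if_pos (Nat.lt_succ_of_lt h2)]
        · rw [if_neg h2, if_neg (by omega)]
    have e2 : T k = Function.update (T k) ⟨k, hk⟩ (u ⟨k, hk⟩) := by
      funext j
      rcases eq_or_ne j ⟨k, hk⟩ with rfl | hj
      · rw [Function.update_self]
        show (if ((⟨k, hk⟩ : Fin (M+1)) : ℕ) < k then y ⟨k, hk⟩ else u ⟨k, hk⟩) = u ⟨k, hk⟩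
        exact if_neg (lt_irrefl k)
      · rw [Function.update_of_ne hj]
    calc |Stmt6Aux.gVol (T (k+1)) - Stmt6Aux.gVol (T k)|
        = |Stmt6Aux.gVol (Function.update (T k) ⟨k, hk⟩ (y ⟨k, hk⟩))
            - Stmt6Aux.gVol (Function.update (T k) ⟨k, hk⟩ (u ⟨k, hk⟩))| := by rw [← e1, ← e2]
      _ ≤ ‖y ⟨k, hk⟩ - u ⟨k, hk⟩‖ := Stmt6Aux.slot (T k) ⟨k, hk⟩ _ _ (fun i _ => hTnorm k i)
      _ ≤ 2*δ := hyu ⟨k, hk⟩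
  have htel : |Stmt6Aux.gVol y - Stmt6Aux.gVol u| ≤ ((M+1:ℕ):ℝ) * (2*δ) := by
    have hsum : Stmt6Aux.gVol y - Stmt6Aux.gVol u
        = ∑ k ∈ Finset.range (M+1), (Stmt6Aux.gVol (T (k+1)) - Stmt6Aux.gVol (T k)) := by
      rw [Finset.sum_range_sub (fun k => Stmt6Aux.gVol (T k)), hT0, hTm]
    rw [hsum]
    calc |∑ k ∈ Finset.range (M+1), (Stmt6Aux.gVol (T (k+1)) - Stmt6Aux.gVol (T k))|
        ≤ ∑ k ∈ Finset.range (M+1), |Stmt6Aux.gVol (T (k+1)) - Stmt6Aux.gVol (T k)| :=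
          Finset.abs_sum_le_sum_abs _ _
      _ ≤ ∑ _k ∈ Finset.range (M+1), 2*δ :=
          Finset.sum_le_sum fun k hk => hstep k (Finset.mem_range.mp hk)
      _ = ((M+1:ℕ):ℝ) * (2*δ) := by rw [Finset.sum_const, Finset.card_range, nsmul_eq_mul]
  have habs : |Theta x - Theta v| ≤ 2 * ((M+1:ℕ):ℝ) * δ := by
    rw [hΘx, hΘv]
    calc |Stmt6Aux.gVol y - Stmt6Aux.gVol u| ≤ ((M+1:ℕ):ℝ) * (2*δ) := htel
      _ = 2 * ((M+1:ℕ):ℝ) * δ := by ring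
  refine ⟨?_, habs⟩
  -- linear independence
  have hmpos : (0:ℝ) < 2 * ((M+1:ℕ):ℝ) := by positivity
  have hΘpos : 2 * ((M+1:ℕ):ℝ) * δ < Theta v := by
    rw [div_eq_inv_mul] at hδ
    have := (lt_div_iff₀ hmpos).mp (by rw [div_eq_inv_mul]; exact hδ)
    linarith
  have hypos : 0 < Stmt6Aux.gVol y := by
    have h1 : |Stmt6Aux.gVol y - Stmt6Aux.gVol u| ≤ 2 * ((M+1:ℕ):ℝ) * δ := by
      calc |Stmt6Aux.gVol y - Stmt6Aux.gVol u| ≤ ((M+1:ℕ):ℝ) * (2*δ) := htel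
        _ = 2 * ((M+1:ℕ):ℝ) * δ := by ring
    have h2 := abs_le.mp h1
    have h3 : Theta v = Stmt6Aux.gVol u := hΘv
    linarith [h2.1]
  have hdet : (Stmt6Aux.gram y).det ≠ 0 := by
    have : 0 < (Stmt6Aux.gram y).det := Real.sqrt_pos.mp hypos
    exact ne_of_gt this
  have hyli : LinearIndependent ℝ y := Stmt6Aux.linearIndependent_of_gram y hdet
  have hxy : x = (fun j => Units.mk0 ((σ j * ‖x j‖⁻¹)⁻¹)
      (inv_ne_zero (mul_ne_zero (hσ0 j) (inv_ne_zero (ne_of_gt (hxnorm j)))))) • y := by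
    funext j
    show x j = ((σ j * ‖x j‖⁻¹)⁻¹ : ℝ) • y j
    rw [hydef]
    simp only
    rw [smul_smul, inv_mul_cancel₀ (mul_ne_zero (hσ0 j) (inv_ne_zero (ne_of_gt (hxnorm j)))),
      one_smul]
  rw [hxy]
  exact hyli.units_smul _
end

section
/- Let v = (v_1,…,v_m) be a linearly independent m-tuple in R^n, let 0 ≤ δ < Θ(v)/(2m), and let x = (x_1,…,x_m) be nonzero vectors with dist(x_j, v_j) ≤ δ for each j. Set W = span(x_1,…,x_m) and V = span(v_1,…,v_m). Then dist(W,V) ≤ 2mδ/Θ(x), where dist(W,V) is the maximum of dist(x,V) over nonzero x ∈ W. -/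
open scoped BigOperators

/-! ### Auxiliary Gram determinant machinery -/

open Matrix Finset

namespace Stmt7Aux

variable {n : ℕ}

local notation "E" => EuclideanSpace ℝ (Fin n)

noncomputable def Gm {r : ℕ} (u : Fin r → E) : Matrix (Fin r) (Fin r) ℝ :=
  Matrix.of fun i j => (inner ℝ (u i) (u j) : ℝ)

lemma gramVol_eq {r : ℕ} (u : Fin r → E) : gramVol u = Real.sqrt (Gm u).det := rfl

lemma Gm_comp {r : ℕ} (u : Fin r → E) (A : Matrix (Fin r) (Fin r) ℝ) :
    Gm (fun i => ∑ k, A k i • u k) = Aᵀ * Gm u * A := by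
  ext i j
  simp only [Gm, Matrix.of_apply, Matrix.mul_apply, Matrix.transpose_apply]
  rw [sum_inner]
  simp only [real_inner_smul_left, inner_sum, real_inner_smul_right]
  rw [Finset.sum_comm]
  congr 1; ext k
  rw [Finset.sum_mul]
  congr 1; ext l
  ring

lemma det_Gm_update {r : ℕ} (u : Fin r → E) (j : Fin r) (d : Fin r → ℝ) :
    (Gm (Function.update u j (∑ k, d k • u k))).det = (d j)^2 * (Gm u).det := by
  have h : Function.update u j (∑ k, d k • u k) = fun i => ∑ k, ((1 : Matrix (Fin r) (Fin r) ℝ).updateCol j d) k i • u k := by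
    ext i
    by_cases hij : i = j
    · subst hij
      simp [Matrix.updateCol_apply]
    · simp only [Function.update_of_ne hij]
      rw [show (∑ k, ((1 : Matrix (Fin r) (Fin r) ℝ).updateCol j d) k i • u k) = ∑ k, (1 : Matrix (Fin r) (Fin r) ℝ) k i • u k by
        congr 1; ext k; rw [Matrix.updateCol_apply, if_neg hij]]
      simp [Matrix.one_apply]
  rw [h, Gm_comp, Matrix.det_mul, Matrix.det_mul, Matrix.det_transpose]
  have : ((1 : Matrix (Fin r) (Fin r) ℝ).updateCol j d).det = d j := by
    rw [← Matrix.cramer_apply, Matrix.cramer_one]; rfl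
  rw [this]; ring

lemma det_Gm_snoc_orth {r : ℕ} (u : Fin r → E) (q : E) (h : ∀ i, (inner ℝ (u i) q : ℝ) = 0) :
    (Gm (Fin.snoc u q)).det = (Gm u).det * ‖q‖^2 := by
  have hlast : ∀ b : Fin 1, finSumFinEquiv (Sum.inr b) = Fin.last r := by
    intro b
    have : b = 0 := Subsingleton.elim _ _
    subst this
    simp [finSumFinEquiv_apply_right]
    ext; simp
  have hcast : ∀ a : Fin r, finSumFinEquiv (Sum.inl a) = Fin.castSucc a := by
    intro a; rfl
  have key : Matrix.fromBlocks (Gm u) 0 0 (Matrix.of fun _ _ : Fin 1 => ‖q‖^2) =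
      (Gm (Fin.snoc u q)).submatrix finSumFinEquiv finSumFinEquiv := by
    ext i j
    rcases i with a | a <;> rcases j with b | b <;>
        simp only [Matrix.submatrix_apply, hlast, hcast, Matrix.fromBlocks_apply₁₁,
          Matrix.fromBlocks_apply₁₂, Matrix.fromBlocks_apply₂₁, Matrix.fromBlocks_apply₂₂,
          Matrix.zero_apply, Matrix.of_apply, Gm, Fin.snoc_castSucc, Fin.snoc_last]
    · rw [h a]
    · rw [real_inner_comm, h b]
    · rw [real_inner_self_eq_norm_sq]
  have := Matrix.det_submatrix_equiv_self finSumFinEquiv (Gm (Fin.snoc u q))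
  rw [← key] at this
  rw [← this, Matrix.det_fromBlocks_zero₂₁, Matrix.det_fin_one]
  simp

lemma det_Gm_snoc {r : ℕ} (u : Fin r → E) (a : E) :
    ∃ q : E, ‖q‖ ≤ ‖a‖ ∧ (Gm (Fin.snoc u a)).det = (Gm u).det * ‖q‖^2 := by
  set S := Submodule.span ℝ (Set.range u) with hS
  set p : E := (Submodule.orthogonalProjectionOnto S a : E) with hp
  set q : E := a - p with hqdef
  have hqmem : q ∈ Sᗮ := Submodule.sub_starProjection_mem_orthogonal (K := S) a
  have horth : ∀ i, (inner ℝ (u i) q : ℝ) = 0 := fun i =>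
    hqmem (u i) (Submodule.subset_span (Set.mem_range_self i))
  have hqa : (inner ℝ q a : ℝ) = ‖q‖^2 := by
    have hqp : (inner ℝ q p : ℝ) = 0 := by
      rw [real_inner_comm]
      exact hqmem p (Submodule.orthogonalProjectionOnto S a).2
    have : a = p + q := by rw [hqdef]; abel
    rw [this, inner_add_right, hqp, real_inner_self_eq_norm_sq]; ring
  have hqle : ‖q‖ ≤ ‖a‖ := by
    rcases eq_or_lt_of_le (norm_nonneg q) with h0 | h0
    · rw [← h0]; exact norm_nonneg a
    · have := real_inner_le_norm q a
      rw [hqa] at this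
      nlinarith
  obtain ⟨c, hc⟩ := (Submodule.mem_span_range_iff_exists_fun ℝ).mp
    ((Submodule.orthogonalProjectionOnto S a).2 : p ∈ S)
  refine ⟨q, hqle, ?_⟩
  set d : Fin (r+1) → ℝ := Fin.snoc (fun i => -(c i)) 1 with hd
  have key := det_Gm_update (Fin.snoc u a) (Fin.last r) d
  have hsum : (∑ k, d k • Fin.snoc u a k) = q := by
    rw [hd]
    rw [Fin.sum_univ_castSucc]
    simp only [Fin.snoc_castSucc, Fin.snoc_last, one_smul]
    rw [hqdef, hp, ← hc]
    simp only [neg_smul, Finset.sum_neg_distrib]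
    abel
  rw [hsum, Fin.update_snoc_last, hd, Fin.snoc_last] at key
  simp only [one_pow, one_mul] at key
  rw [← key, det_Gm_snoc_orth u q horth]

lemma det_Gm_nonneg : ∀ {r : ℕ} (u : Fin r → E), 0 ≤ (Gm u).det := by
  intro r
  induction r with
  | zero => intro u; rw [Matrix.det_fin_zero]; norm_num
  | succ r ih =>
    intro u
    rw [← Fin.snoc_init_self u]
    obtain ⟨q, _, hq⟩ := det_Gm_snoc (Fin.init u) (u (Fin.last r))
    rw [hq]
    exact mul_nonneg (ih _) (sq_nonneg _)

lemma det_Gm_le_prod : ∀ {r : ℕ} (u : Fin r → E), (Gm u).det ≤ ∏ i, ‖u i‖^2 := by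
  intro r
  induction r with
  | zero => intro u; rw [Matrix.det_fin_zero]; simp
  | succ r ih =>
    intro u
    conv_lhs => rw [← Fin.snoc_init_self u]
    rw [Fin.prod_univ_castSucc]
    obtain ⟨q, hqle, hq⟩ := det_Gm_snoc (Fin.init u) (u (Fin.last r))
    rw [hq]
    have h1 : (Gm (Fin.init u)).det ≤ ∏ i : Fin r, ‖(Fin.init u) i‖^2 := ih _
    have h2 : ‖q‖^2 ≤ ‖u (Fin.last r)‖^2 := by
      apply pow_le_pow_left₀ (norm_nonneg q) hqle
    calc (Gm (Fin.init u)).det * ‖q‖^2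
        ≤ (∏ i : Fin r, ‖(Fin.init u) i‖^2) * ‖u (Fin.last r)‖^2 := by
          apply mul_le_mul h1 h2 (sq_nonneg ‖q‖)
          exact Finset.prod_nonneg fun i _ => sq_nonneg _
      _ = (∏ i : Fin r, ‖u (Fin.castSucc i)‖^2) * ‖u (Fin.last r)‖^2 := by rfl

variable {r : ℕ}

noncomputable def Pb (u : Fin r → E) (j : Fin r) (a b : E) : ℝ :=
  (Matrix.of fun i k =>
    (inner ℝ (Function.update u j a i) (Function.update u j b k) : ℝ)).det

lemma Pb_diag (u : Fin r → E) (j : Fin r) (a : E) :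
    Pb u j a a = (Gm (Function.update u j a)).det := rfl

lemma Pb_symm (u : Fin r → E) (j : Fin r) (a b : E) : Pb u j a b = Pb u j b a := by
  rw [Pb, ← Matrix.det_transpose]
  congr 1
  ext i k
  simp only [Matrix.transpose_apply, Matrix.of_apply]
  exact real_inner_comm _ _

lemma Pb_add_left (u : Fin r → E) (j : Fin r) (a a' c : E) :
    Pb u j (a + a') c = Pb u j a c + Pb u j a' c := by
  have key : ∀ z : E, (Matrix.of fun i k =>
      (inner ℝ (Function.update u j z i) (Function.update u j c k) : ℝ)) =
      (Matrix.of fun i k =>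
        (inner ℝ (Function.update u j 0 i) (Function.update u j c k) : ℝ)).updateRow j
        (fun k => (inner ℝ z (Function.update u j c k) : ℝ)) := by
    intro z
    ext i k
    by_cases hij : i = j
    · subst hij
      rw [Matrix.updateRow_self]
      simp only [Matrix.of_apply, Function.update_self]
    · rw [Matrix.updateRow_ne hij]
      simp only [Matrix.of_apply, Function.update_of_ne hij]
  simp only [Pb]
  rw [key (a + a'), key a, key a']
  have : (fun k => (inner ℝ (a + a') (Function.update u j c k) : ℝ)) =
      (fun k => (inner ℝ a (Function.update u j c k) : ℝ)) +
      (fun k => (inner ℝ a' (Function.update u j c k) : ℝ)) := by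
    funext k; simp only [Pi.add_apply]; exact inner_add_left _ _ _
  rw [this, Matrix.det_updateRow_add]

lemma Pb_smul_left (u : Fin r → E) (j : Fin r) (t : ℝ) (a c : E) :
    Pb u j (t • a) c = t * Pb u j a c := by
  have key : ∀ z : E, (Matrix.of fun i k =>
      (inner ℝ (Function.update u j z i) (Function.update u j c k) : ℝ)) =
      (Matrix.of fun i k =>
        (inner ℝ (Function.update u j 0 i) (Function.update u j c k) : ℝ)).updateRow j
        (fun k => (inner ℝ z (Function.update u j c k) : ℝ)) := by
    intro z
    ext i k
    by_cases hij : i = j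
    · subst hij
      rw [Matrix.updateRow_self]
      simp only [Matrix.of_apply, Function.update_self]
    · rw [Matrix.updateRow_ne hij]
      simp only [Matrix.of_apply, Function.update_of_ne hij]
  simp only [Pb]
  rw [key (t • a), key a]
  have : (fun k => (inner ℝ (t • a) (Function.update u j c k) : ℝ)) =
      t • (fun k => (inner ℝ a (Function.update u j c k) : ℝ)) := by
    funext k; simp only [Pi.smul_apply, smul_eq_mul]; exact real_inner_smul_left _ _ _
  rw [this, Matrix.det_updateRow_smul]

lemma Pb_add_right (u : Fin r → E) (j : Fin r) (c a a' : E) :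
    Pb u j c (a + a') = Pb u j c a + Pb u j c a' := by
  rw [Pb_symm, Pb_add_left, Pb_symm u j a c, Pb_symm u j a' c]

lemma Pb_smul_right (u : Fin r → E) (j : Fin r) (t : ℝ) (c a : E) :
    Pb u j c (t • a) = t * Pb u j c a := by
  rw [Pb_symm, Pb_smul_left, Pb_symm u j a c]

lemma Pb_nonneg (u : Fin r → E) (j : Fin r) (a : E) : 0 ≤ Pb u j a a := by
  rw [Pb_diag]; exact det_Gm_nonneg _

lemma Pb_le_sqrt (u : Fin r → E) (j : Fin r) (a b : E) :
    Pb u j a b ≤ Real.sqrt (Pb u j a a) * Real.sqrt (Pb u j b b) := by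
  have hquad : ∀ t : ℝ, 0 ≤ Pb u j b b * (t * t) + (2 * Pb u j a b) * t + Pb u j a a := by
    intro t
    have h := Pb_nonneg u j (a + t • b)
    simp only [Pb_add_left, Pb_add_right, Pb_smul_left, Pb_smul_right] at h
    rw [Pb_symm u j b a] at h
    nlinarith [h]
  have hd := discrim_le_zero hquad
  rw [discrim] at hd
  have h1 : (Pb u j a b)^2 ≤ Pb u j a a * Pb u j b b := by nlinarith
  calc Pb u j a b ≤ |Pb u j a b| := le_abs_self _
    _ = Real.sqrt ((Pb u j a b)^2) := (Real.sqrt_sq_eq_abs _).symm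
    _ ≤ Real.sqrt (Pb u j a a * Pb u j b b) := Real.sqrt_le_sqrt h1
    _ = Real.sqrt (Pb u j a a) * Real.sqrt (Pb u j b b) :=
        Real.sqrt_mul (Pb_nonneg u j a) _

lemma sqrt_det_update_add (u : Fin r → E) (j : Fin r) (a b : E) :
    Real.sqrt ((Gm (Function.update u j (a + b))).det) ≤
      Real.sqrt ((Gm (Function.update u j a)).det) +
      Real.sqrt ((Gm (Function.update u j b)).det) := by
  suffices hmain : Real.sqrt (Pb u j (a + b) (a + b)) ≤
      Real.sqrt (Pb u j a a) + Real.sqrt (Pb u j b b) by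
    rw [Pb_diag, Pb_diag, Pb_diag] at hmain; exact hmain
  have hexp : Pb u j (a + b) (a + b) = Pb u j a a + 2 * Pb u j a b + Pb u j b b := by
    rw [Pb_add_left, Pb_add_right, Pb_add_right, Pb_symm u j b a]; ring
  have hle : Pb u j (a + b) (a + b) ≤
      (Real.sqrt (Pb u j a a) + Real.sqrt (Pb u j b b))^2 := by
    rw [hexp, add_sq, Real.sq_sqrt (Pb_nonneg u j a), Real.sq_sqrt (Pb_nonneg u j b)]
    have := Pb_le_sqrt u j a b
    nlinarith
  calc Real.sqrt (Pb u j (a + b) (a + b))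
      ≤ Real.sqrt ((Real.sqrt (Pb u j a a) + Real.sqrt (Pb u j b b))^2) :=
        Real.sqrt_le_sqrt hle
    _ = Real.sqrt (Pb u j a a) + Real.sqrt (Pb u j b b) := by
        rw [Real.sqrt_sq (by positivity)]

/-! ### gramVol lemmas -/

lemma gramVol_nonneg (u : Fin r → E) : 0 ≤ gramVol u := Real.sqrt_nonneg _

lemma gramVol_le_prod (u : Fin r → E) : gramVol u ≤ ∏ i, ‖u i‖ := by
  rw [gramVol_eq]
  calc Real.sqrt (Gm u).det ≤ Real.sqrt (∏ i, ‖u i‖^2) := Real.sqrt_le_sqrt (det_Gm_le_prod u)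
    _ = ∏ i, ‖u i‖ := by
        rw [Finset.prod_pow]
        exact Real.sqrt_sq (Finset.prod_nonneg fun i _ => norm_nonneg _)

lemma gramVol_update_add (u : Fin r → E) (j : Fin r) (a b : E) :
    gramVol (Function.update u j (a + b)) ≤
      gramVol (Function.update u j a) + gramVol (Function.update u j b) := by
  simpa only [gramVol_eq] using sqrt_det_update_add u j a b

lemma gramVol_update_eq (u : Fin r → E) (j : Fin r) (d : Fin r → ℝ) :
    gramVol (Function.update u j (∑ k, d k • u k)) = |d j| * gramVol u := by
  rw [gramVol_eq, gramVol_eq, det_Gm_update, Real.sqrt_mul (sq_nonneg _),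
    Real.sqrt_sq_eq_abs]

lemma gramVol_scale (u : Fin r → E) (c : Fin r → ℝ) :
    gramVol (fun i => c i • u i) = (∏ i, |c i|) * gramVol u := by
  have h : (fun i => c i • u i) = fun i => ∑ k, (Matrix.diagonal c) k i • u k := by
    ext i
    rw [Finset.sum_eq_single i]
    · rw [Matrix.diagonal_apply_eq]
    · intro b _ hb; rw [Matrix.diagonal_apply_ne _ hb, zero_smul]
    · intro hi; exact absurd (Finset.mem_univ i) hi
  rw [gramVol_eq, gramVol_eq, h, Gm_comp, Matrix.det_mul, Matrix.det_mul,
    Matrix.det_transpose, Matrix.det_diagonal]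
  rw [show (∏ i, c i) * (Gm u).det * (∏ i, c i) = (∏ i, c i)^2 * (Gm u).det by ring]
  rw [Real.sqrt_mul (sq_nonneg _), Real.sqrt_sq_eq_abs, Finset.abs_prod]

/-! ### projection lemmas -/

lemma normP_le (V : Submodule ℝ E) (x y : E) (hy : y ∈ V) :
    ‖(Submodule.orthogonalProjectionOnto Vᗮ x : E)‖ ≤ ‖x - y‖ := by
  show ‖Vᗮ.starProjection x‖ ≤ _
  rw [Submodule.starProjection_orthogonal_val, Submodule.starProjection_minimal]
  have hb : BddBelow (Set.range fun z : V => ‖x - (z : E)‖) := by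
    refine ⟨0, ?_⟩
    rintro _ ⟨z, rfl⟩
    positivity
  exact ciInf_le hb ⟨y, hy⟩

lemma normP_le_line (V : Submodule ℝ E) (x v : E) (hx0 : x ≠ 0) (hv0 : v ≠ 0)
    (hv : v ∈ V) :
    ‖(Submodule.orthogonalProjectionOnto Vᗮ x : E)‖ ≤ ‖x‖ * projDist x v := by
  have hxn : (0:ℝ) < ‖x‖ := norm_pos_iff.mpr hx0
  have hvn : (0:ℝ) < ‖v‖ := norm_pos_iff.mpr hv0
  set t : ℝ := (inner ℝ x v : ℝ) / ‖v‖^2 with ht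
  have hle := normP_le V x (t • v) (V.smul_mem t hv)
  refine hle.trans (le_of_eq ?_)
  have hsq : ‖x - t • v‖^2 = ‖x‖^2 - (inner ℝ x v : ℝ)^2 / ‖v‖^2 := by
    rw [norm_sub_sq_real, real_inner_smul_right, norm_smul, mul_pow, Real.norm_eq_abs,
      sq_abs, ht]
    field_simp
    ring
  have hN : (0:ℝ) ≤ ‖x‖^2 * ‖v‖^2 - (inner ℝ x v : ℝ)^2 := by
    have h := abs_real_inner_le_norm x v
    have h2 : (inner ℝ x v : ℝ)^2 ≤ (‖x‖ * ‖v‖)^2 := by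
      rw [← sq_abs]
      exact pow_le_pow_left₀ (abs_nonneg _) h 2
    nlinarith
  have h1 : ‖x - t • v‖ = Real.sqrt (‖x‖^2 - (inner ℝ x v : ℝ)^2 / ‖v‖^2) := by
    rw [← hsq, Real.sqrt_sq (norm_nonneg _)]
  rw [h1, projDist]
  rw [show ‖x‖^2 - (inner ℝ x v : ℝ)^2 / ‖v‖^2
      = (‖x‖^2 * ‖v‖^2 - (inner ℝ x v : ℝ)^2) / ‖v‖^2 by field_simp]
  rw [Real.sqrt_div hN, Real.sqrt_sq (norm_nonneg v)]
  field_simp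

lemma unit_diff {δ : ℝ} (hδ0 : 0 ≤ δ) (x v : E) (hx0 : x ≠ 0) (hv0 : v ≠ 0)
    (hpd : projDist x v ≤ δ) :
    ∃ ε : ℝ, |ε| = 1 ∧ ‖‖x‖⁻¹ • x - (ε * ‖v‖⁻¹) • v‖ ≤ Real.sqrt 2 * δ := by
  have hxn : (0:ℝ) < ‖x‖ := norm_pos_iff.mpr hx0
  have hvn : (0:ℝ) < ‖v‖ := norm_pos_iff.mpr hv0
  set c : ℝ := (inner ℝ x v : ℝ) / (‖x‖ * ‖v‖) with hc
  set ε : ℝ := if 0 ≤ c then 1 else -1 with hε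
  have hεabs : |ε| = 1 := by
    rw [hε]; split <;> simp
  have hεc : ε * c = |c| := by
    rw [hε]
    split
    · rw [one_mul, abs_of_nonneg ‹_›]
    · rw [abs_of_neg (lt_of_not_ge ‹_›)]; ring
  have hiv2 : (inner ℝ x v : ℝ)^2 ≤ (‖x‖ * ‖v‖)^2 := by
    rw [← sq_abs]
    exact pow_le_pow_left₀ (abs_nonneg _) (abs_real_inner_le_norm x v) 2
  have hc2 : c^2 ≤ 1 := by
    rw [hc, div_pow, div_le_one (by positivity)]
    exact hiv2
  have hN : (0:ℝ) ≤ ‖x‖^2 * ‖v‖^2 - (inner ℝ x v : ℝ)^2 := by nlinarith [hiv2]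
  have hpd2 : (projDist x v)^2 = 1 - c^2 := by
    rw [projDist, div_pow, Real.sq_sqrt hN, hc, div_pow]
    field_simp
  have h1c : 1 - c^2 ≤ δ^2 := by
    rw [← hpd2]
    apply pow_le_pow_left₀ (by rw [projDist]; positivity) hpd
  have hinner : (inner ℝ (‖x‖⁻¹ • x) ((ε * ‖v‖⁻¹) • v) : ℝ) = ε * c := by
    rw [real_inner_smul_left, real_inner_smul_right, hc]
    field_simp
  have hnu : ‖‖x‖⁻¹ • x‖ = 1 := by
    rw [norm_smul, Real.norm_eq_abs, abs_inv, abs_norm]; field_simp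
  have hnv : ‖(ε * ‖v‖⁻¹) • v‖ = 1 := by
    rw [norm_smul, Real.norm_eq_abs, abs_mul, hεabs, abs_inv, abs_norm]; field_simp
  have hsq : ‖‖x‖⁻¹ • x - (ε * ‖v‖⁻¹) • v‖^2 = 2 - 2 * |c| := by
    rw [norm_sub_sq_real, hinner, hnu, hnv, hεc]; ring
  have habs : |c| ≤ 1 := by
    have := sq_abs c
    nlinarith [abs_nonneg c]
  have hfin : ‖‖x‖⁻¹ • x - (ε * ‖v‖⁻¹) • v‖^2 ≤ 2 * δ^2 := by
    rw [hsq]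
    nlinarith [sq_abs c, abs_nonneg c]
  refine ⟨ε, hεabs, ?_⟩
  calc ‖‖x‖⁻¹ • x - (ε * ‖v‖⁻¹) • v‖
      = Real.sqrt (‖‖x‖⁻¹ • x - (ε * ‖v‖⁻¹) • v‖^2) := (Real.sqrt_sq (norm_nonneg _)).symm
    _ ≤ Real.sqrt (2 * δ^2) := Real.sqrt_le_sqrt hfin
    _ = Real.sqrt 2 * δ := by
        rw [Real.sqrt_mul (by norm_num : (0:ℝ) ≤ 2), Real.sqrt_sq hδ0]

end Stmt7Aux

theorem stmt7 {m n : ℕ} (hm : 1 ≤ m) (hmn : m ≤ n)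
    (v : Fin m → EuclideanSpace ℝ (Fin n)) (hv : LinearIndependent ℝ v)
    (δ : ℝ) (hδ0 : 0 ≤ δ) (hδ : δ < Theta v / (2 * m))
    (x : Fin m → EuclideanSpace ℝ (Fin n)) (hx : ∀ j, x j ≠ 0)
    (hdx : ∀ j, projDist (x j) (v j) ≤ δ) :
    subDist (Submodule.span ℝ (Set.range x)) (Submodule.span ℝ (Set.range v)) ≤
      2 * m * δ / Theta x := by
  classical
  have hvne : ∀ j, v j ≠ 0 := fun j => hv.ne_zero j
  have hm0 : (0:ℝ) < (m:ℝ) := by exact_mod_cast hm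
  have hTv : 2 * (m:ℝ) * δ < Theta v := by
    rw [lt_div_iff₀ (by positivity)] at hδ
    linarith
  have hpx : (0:ℝ) < ∏ i, ‖x i‖ :=
    Finset.prod_pos (fun i _ => norm_pos_iff.mpr (hx i))
  choose ε hε1 hε2 using fun j =>
    Stmt7Aux.unit_diff hδ0 (x j) (v j) (hx j) (hvne j) (hdx j)
  set xh : Fin m → EuclideanSpace ℝ (Fin n) := fun j => ‖x j‖⁻¹ • x j with hxh
  set vh : Fin m → EuclideanSpace ℝ (Fin n) := fun j => (ε j * ‖v j‖⁻¹) • v j with hvh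
  have hxh1 : ∀ j, ‖xh j‖ = 1 := by
    intro j
    rw [hxh]
    simp only
    rw [norm_smul, Real.norm_eq_abs, abs_inv, abs_norm]
    rw [inv_mul_cancel₀ (norm_pos_iff.mpr (hx j)).ne']
  have hvh1 : ∀ j, ‖vh j‖ = 1 := by
    intro j
    rw [hvh]
    simp only
    rw [norm_smul, Real.norm_eq_abs, abs_mul, hε1 j, abs_inv, abs_norm]
    rw [one_mul, inv_mul_cancel₀ (norm_pos_iff.mpr (hvne j)).ne']
  have hgx : gramVol xh = Theta x := by
    rw [hxh, Stmt7Aux.gramVol_scale x (fun j => ‖x j‖⁻¹), Theta]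
    rw [show (∏ i, |(‖x i‖⁻¹)|) = (∏ i, ‖x i‖)⁻¹ by
      rw [← Finset.prod_inv_distrib]
      exact Finset.prod_congr rfl fun i _ => by rw [abs_inv, abs_norm]]
    rw [eq_div_iff hpx.ne']
    rw [mul_comm, ← mul_assoc, mul_inv_cancel₀ hpx.ne', one_mul]
  have hgv : gramVol vh = Theta v := by
    have hpv : (0:ℝ) < ∏ i, ‖v i‖ :=
      Finset.prod_pos (fun i _ => norm_pos_iff.mpr (hvne i))
    rw [hvh, Stmt7Aux.gramVol_scale v (fun j => ε j * ‖v j‖⁻¹), Theta]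
    rw [show (∏ i, |ε i * ‖v i‖⁻¹|) = (∏ i, ‖v i‖)⁻¹ by
      rw [← Finset.prod_inv_distrib]
      exact Finset.prod_congr rfl fun i _ => by
        rw [abs_mul, hε1 i, abs_inv, abs_norm, one_mul]]
    rw [eq_div_iff hpv.ne']
    rw [mul_comm, ← mul_assoc, mul_inv_cancel₀ hpv.ne', one_mul]
  -- telescoping: Theta v ≤ Theta x + m * (√2 * δ)
  set T : ℕ → (Fin m → EuclideanSpace ℝ (Fin n)) :=
    fun k j => if (j:ℕ) < k then xh j else vh j with hT
  have hT0 : T 0 = vh := by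
    funext j; rw [hT]; simp
  have hTm : T m = xh := by
    funext j; rw [hT]; simp [j.isLt]
  have hstep : ∀ k, k < m → gramVol (T k) ≤ gramVol (T (k+1)) + Real.sqrt 2 * δ := by
    intro k hk
    set jk : Fin m := ⟨k, hk⟩ with hjk
    have e1 : T k = Function.update (T (k+1)) jk (vh jk) := by
      funext j
      by_cases hj : j = jk
      · subst hj
        rw [Function.update_self, hT]
        simp [hjk]
      · rw [Function.update_of_ne hj, hT]
        simp only
        have hjv : (j:ℕ) ≠ k := fun hc => hj (Fin.ext hc)
        by_cases h1 : (j:ℕ) < k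
        · rw [if_pos h1, if_pos (by omega)]
        · rw [if_neg h1, if_neg (by omega)]
    have e2 : Function.update (T (k+1)) jk (xh jk) = T (k+1) := by
      rw [show xh jk = T (k+1) jk by rw [hT]; simp [hjk]]
      exact Function.update_eq_self _ _
    have tri := Stmt7Aux.gramVol_update_add (T (k+1)) jk (xh jk) (vh jk - xh jk)
    rw [show xh jk + (vh jk - xh jk) = vh jk by abel] at tri
    rw [e2] at tri
    have hbound : gramVol (Function.update (T (k+1)) jk (vh jk - xh jk)) ≤
        Real.sqrt 2 * δ := by
      refine (Stmt7Aux.gramVol_le_prod _).trans ?_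
      have hprod : (∏ i, ‖Function.update (T (k+1)) jk (vh jk - xh jk) i‖)
          = ‖vh jk - xh jk‖ := by
        rw [Finset.prod_eq_single jk]
        · rw [Function.update_self]
        · intro b _ hb
          rw [Function.update_of_ne hb, hT]
          simp only
          split
          · exact hxh1 b
          · exact hvh1 b
        · intro h; exact absurd (Finset.mem_univ jk) h
      rw [hprod, norm_sub_rev]
      exact hε2 jk
    calc gramVol (T k) = gramVol (Function.update (T (k+1)) jk (vh jk)) := by rw [e1]
      _ ≤ gramVol (T (k+1)) + gramVol (Function.update (T (k+1)) jk (vh jk - xh jk)) := tri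
      _ ≤ gramVol (T (k+1)) + Real.sqrt 2 * δ := by linarith
  have htel : ∀ k, k ≤ m → gramVol (T 0) ≤ gramVol (T k) + k * (Real.sqrt 2 * δ) := by
    intro k
    induction k with
    | zero => intro _; simp
    | succ k ih =>
      intro hk1
      have hk : k < m := by omega
      have h1 := ih (le_of_lt hk)
      have h2 := hstep k hk
      push_cast
      nlinarith [Real.sqrt_nonneg 2]
  have hpert : Theta v ≤ Theta x + m * (Real.sqrt 2 * δ) := by
    have := htel m le_rfl
    rw [hT0, hTm, hgx, hgv] at this
    exact this
  have hs2 : Real.sqrt 2 ≤ 2 := by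
    have h4 : Real.sqrt 2 ≤ Real.sqrt 4 := Real.sqrt_le_sqrt (by norm_num)
    rwa [show (4:ℝ) = 2^2 by norm_num, Real.sqrt_sq (by norm_num : (0:ℝ) ≤ 2)] at h4
  have hTx : 0 < Theta x := by
    nlinarith [Real.sqrt_nonneg 2, mul_nonneg hm0.le hδ0]
  -- main bound
  apply Real.sSup_le
  · rintro d ⟨w, hwW, hw0, rfl⟩
    obtain ⟨c, hc⟩ := (Submodule.mem_span_range_iff_exists_fun ℝ).mp hwW
    have hwn : (0:ℝ) < ‖w‖ := norm_pos_iff.mpr hw0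
    set V := Submodule.span ℝ (Set.range v) with hV
    -- coefficient bound
    have hcoef : ∀ i, |c i| * ‖x i‖ ≤ ‖w‖ / Theta x := by
      intro i
      have hupd : gramVol (Function.update x i w) = |c i| * gramVol x := by
        rw [← hc, Stmt7Aux.gramVol_update_eq]
      have hhad : gramVol (Function.update x i w) ≤ ‖w‖ * ∏ k ∈ Finset.univ.erase i, ‖x k‖ := by
        refine (Stmt7Aux.gramVol_le_prod _).trans (le_of_eq ?_)
        have : (fun k => ‖Function.update x i w k‖) =
            Function.update (fun k => ‖x k‖) i ‖w‖ := by
          funext k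
          by_cases hk : k = i
          · subst hk; rw [Function.update_self, Function.update_self]
          · rw [Function.update_of_ne hk, Function.update_of_ne hk]
        rw [this, Finset.prod_update_of_mem (Finset.mem_univ i), Finset.erase_eq]
      have hprodsplit : ‖x i‖ * ∏ k ∈ Finset.univ.erase i, ‖x k‖ = ∏ k, ‖x k‖ := by
        exact Finset.mul_prod_erase Finset.univ (fun k => ‖x k‖) (Finset.mem_univ i)
      have hgth : gramVol x = Theta x * ∏ k, ‖x k‖ := by
        rw [Theta, div_mul_cancel₀ _ hpx.ne']
      have herase : (0:ℝ) ≤ ∏ k ∈ Finset.univ.erase i, ‖x k‖ :=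
        Finset.prod_nonneg fun k _ => norm_nonneg _
      rw [le_div_iff₀ hTx]
      have step1 : |c i| * gramVol x ≤ ‖w‖ * ∏ k ∈ Finset.univ.erase i, ‖x k‖ := by
        rw [← hupd]; exact hhad
      have step2 : |c i| * gramVol x * ‖x i‖ ≤ ‖w‖ * ∏ k, ‖x k‖ := by
        calc |c i| * gramVol x * ‖x i‖
            ≤ (‖w‖ * ∏ k ∈ Finset.univ.erase i, ‖x k‖) * ‖x i‖ :=
              mul_le_mul_of_nonneg_right step1 (norm_nonneg _)
          _ = ‖w‖ * (‖x i‖ * ∏ k ∈ Finset.univ.erase i, ‖x k‖) := by ring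
          _ = ‖w‖ * ∏ k, ‖x k‖ := by rw [hprodsplit]
      rw [hgth] at step2
      have := (mul_le_mul_iff_of_pos_right hpx).mp (by linarith [step2] : |c i| * ‖x i‖ * Theta x * (∏ k, ‖x k‖) ≤ ‖w‖ * (∏ k, ‖x k‖))
      linarith
    -- projection bound
    have hproj : ∀ i, ‖(Submodule.orthogonalProjectionOnto Vᗮ (x i) : EuclideanSpace ℝ (Fin n))‖ ≤ ‖x i‖ * δ := by
      intro i
      refine (Stmt7Aux.normP_le_line V (x i) (v i) (hx i) (hvne i)
        (Submodule.subset_span (Set.mem_range_self i))).trans ?_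
      exact mul_le_mul_of_nonneg_left (hdx i) (norm_nonneg _)
    have hPsum : (Submodule.orthogonalProjectionOnto Vᗮ w : EuclideanSpace ℝ (Fin n)) =
        ∑ i, c i • (Submodule.orthogonalProjectionOnto Vᗮ (x i) : EuclideanSpace ℝ (Fin n)) := by
      rw [← hc, map_sum]
      rw [Submodule.coe_sum]
      refine Finset.sum_congr rfl fun i _ => ?_
      rw [_root_.map_smul]
      rfl
    have hPw : ‖(Submodule.orthogonalProjectionOnto Vᗮ w : EuclideanSpace ℝ (Fin n))‖ ≤
        (m:ℝ) * δ * ‖w‖ / Theta x := by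
      rw [hPsum]
      refine (norm_sum_le _ _).trans ?_
      have hterm : ∀ i : Fin m, ‖c i • (Submodule.orthogonalProjectionOnto Vᗮ (x i) : EuclideanSpace ℝ (Fin n))‖
          ≤ (‖w‖ / Theta x) * δ := by
        intro i
        rw [norm_smul, Real.norm_eq_abs]
        calc |c i| * ‖(Submodule.orthogonalProjectionOnto Vᗮ (x i) : EuclideanSpace ℝ (Fin n))‖
            ≤ |c i| * (‖x i‖ * δ) :=
              mul_le_mul_of_nonneg_left (hproj i) (abs_nonneg _)
          _ = (|c i| * ‖x i‖) * δ := by ring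
          _ ≤ (‖w‖ / Theta x) * δ :=
              mul_le_mul_of_nonneg_right (hcoef i) hδ0
      refine (Finset.sum_le_sum fun i _ => hterm i).trans (le_of_eq ?_)
      rw [Finset.sum_const, Finset.card_univ, Fintype.card_fin, nsmul_eq_mul]
      field_simp
    rw [distToSub, div_le_iff₀ hwn]
    refine hPw.trans ?_
    rw [div_mul_eq_mul_div, div_le_div_iff₀ hTx hTx]
    have hnum : (m:ℝ) * δ * ‖w‖ ≤ 2 * m * δ * ‖w‖ := by
      have h0 : 0 ≤ (m:ℝ) * δ * ‖w‖ := by positivity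
      linarith
    have := mul_le_mul_of_nonneg_right hnum hTx.le
    linarith
  · apply div_nonneg ?_ hTx.le
    positivity
end

section
/- Let (x_1,…,x_n) be a basis of Z^n and let 1 ≤ k < ℓ ≤ n. Set U_1 = span over R of (x_1,…,x_n) with x_ℓ omitted and U_2 = span over R of (x_1,…,x_n) with x_k omitted. Then dist(U_1,U_2) equals ‖x_1∧⋯∧(x_k, x_ℓ omitted)∧⋯∧x_n‖ divided by the product ‖x_1∧⋯∧(x_k omitted)∧⋯∧x_n‖ · ‖x_1∧⋯∧(x_ℓ omitted)∧⋯∧x_n‖. -/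
open scoped BigOperators

section Aux

open Matrix Submodule

lemma gram_eq_mul {n : ℕ} {ι : Type*} [Fintype ι] (v : ι → EuclideanSpace ℝ (Fin n)) :
    (Matrix.of fun i j => (inner ℝ (v i) (v j) : ℝ)) =
      (Matrix.of fun i m => v i m) * (Matrix.of fun i m => v i m)ᴴ := by
  ext i j
  simp [Matrix.mul_apply, PiLp.inner_apply, RCLike.inner_apply, conj_trivial]
  exact Finset.sum_congr rfl fun _ _ => mul_comm _ _

lemma gramDet_nonneg {n : ℕ} {ι : Type*} [Fintype ι] [DecidableEq ι]
    (v : ι → EuclideanSpace ℝ (Fin n)) :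
    0 ≤ Matrix.det (Matrix.of fun i j => (inner ℝ (v i) (v j) : ℝ)) := by
  rw [gram_eq_mul]
  have h := Matrix.posSemidef_self_mul_conjTranspose (Matrix.of fun (i : ι) m => v i m)
  exact h.det_nonneg

lemma gramVol_nonneg {n : ℕ} {ι : Type*} [Fintype ι] [DecidableEq ι]
    (v : ι → EuclideanSpace ℝ (Fin n)) : 0 ≤ gramVol v :=
  Real.sqrt_nonneg _

lemma gramVol_reindex {n : ℕ} {ι ι' : Type*} [Fintype ι] [DecidableEq ι]
    [Fintype ι'] [DecidableEq ι'] (e : ι' ≃ ι) (v : ι → EuclideanSpace ℝ (Fin n)) :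
    gramVol (v ∘ e) = gramVol v := by
  unfold gramVol
  congr 1
  have : (Matrix.of fun i j => (inner ℝ ((v ∘ e) i) ((v ∘ e) j) : ℝ)) =
      (Matrix.of fun i j => (inner ℝ (v i) (v j) : ℝ)).submatrix e e := rfl
  rw [this, Matrix.det_submatrix_equiv_self]

lemma gramVol_extend {n : ℕ} {ι : Type*} [Fintype ι] [DecidableEq ι]
    (v : ι → EuclideanSpace ℝ (Fin n)) (u : EuclideanSpace ℝ (Fin n)) :
    gramVol (Sum.elim v fun _ : Unit => u) =
      gramVol v *
        ‖u - (Submodule.orthogonalProjectionOnto (span ℝ (Set.range v)) u : EuclideanSpace ℝ (Fin n))‖ := by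
  classical
  set K := span ℝ (Set.range v) with hK
  haveI : FiniteDimensional ℝ K := FiniteDimensional.span_of_finite ℝ (Set.finite_range v)
  set p : EuclideanSpace ℝ (Fin n) := (Submodule.orthogonalProjectionOnto K u : EuclideanSpace ℝ (Fin n)) with hp
  obtain ⟨c, hc⟩ : ∃ c : ι → ℝ, ∑ i, c i • v i = p :=
    (mem_span_range_iff_exists_fun ℝ).mp (by rw [hK] at *; exact (Submodule.orthogonalProjectionOnto K u).2)
  set u' := u - p with hu'
  have hperp : ∀ w ∈ K, (inner ℝ w u' : ℝ) = 0 := fun w hw =>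
    (Submodule.mem_orthogonal K u').mp (Submodule.sub_starProjection_mem_orthogonal u) w hw
  have hvperp : ∀ i, (inner ℝ (v i) u' : ℝ) = 0 := fun i =>
    hperp _ (subset_span (Set.mem_range_self i))
  have hpK : p ∈ K := (Submodule.orthogonalProjectionOnto K u).2
  set f : ι ⊕ Unit → EuclideanSpace ℝ (Fin n) := Sum.elim v fun _ => u with hf
  set G : Matrix (ι ⊕ Unit) (ι ⊕ Unit) ℝ := Matrix.of fun i j => (inner ℝ (f i) (f j) : ℝ) with hG
  set c' : ι ⊕ Unit → ℝ := Sum.elim (fun i => -c i) fun _ => 1 with hc'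
  have hrow : ∑ q, c' q • G q = fun j => (inner ℝ u' (f j) : ℝ) := by
    funext j
    simp only [Finset.sum_apply, Pi.smul_apply, smul_eq_mul]
    rw [Fintype.sum_sum_type]
    have h2 : ∀ i : ι, c' (Sum.inl i) * G (Sum.inl i) j = -(c i * (inner ℝ (v i) (f j) : ℝ)) := by
      intro i; simp [hc', hG, hf]
    simp only [h2, Finset.sum_neg_distrib]
    have h3 : ∑ q : Unit, c' (Sum.inr q) * G (Sum.inr q) j = (inner ℝ u (f j) : ℝ) := by
      simp [hc', hG, hf]
    rw [h3]
    have h4 : ∑ i, c i * (inner ℝ (v i) (f j) : ℝ) = (inner ℝ p (f j) : ℝ) := by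
      rw [← hc, sum_inner]
      congr 1; funext i; rw [real_inner_smul_left]
    rw [h4, hu', inner_sub_left]
    ring
  have hdet1 : (G.updateRow (Sum.inr ()) fun j => (inner ℝ u' (f j) : ℝ)).det = G.det := by
    rw [← hrow, Matrix.det_updateRow_sum]
    simp [hc']
  have hpu' : (inner ℝ u' p : ℝ) = 0 := by
    rw [real_inner_comm]; exact hperp p hpK
  have hblock : (G.updateRow (Sum.inr ()) fun j => (inner ℝ u' (f j) : ℝ)) =
      Matrix.fromBlocks (Matrix.of fun i j => (inner ℝ (v i) (v j) : ℝ))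
        (Matrix.of fun i (_ : Unit) => (inner ℝ (v i) u : ℝ)) 0
        (Matrix.of fun (_ : Unit) (_ : Unit) => (inner ℝ u' u' : ℝ)) := by
    ext i j
    rcases i with i | i <;> rcases j with j | j
    · simp [Matrix.updateRow_apply, hG, hf]
    · simp [Matrix.updateRow_apply, hG, hf]
    · simp only [Matrix.updateRow_apply, if_pos rfl]
      have : (inner ℝ u' (v j) : ℝ) = 0 := by rw [real_inner_comm]; exact hvperp j
      simp [hf, this]
    · simp only [Matrix.updateRow_apply, if_pos rfl]
      have : (inner ℝ u' u : ℝ) = (inner ℝ u' u' : ℝ) := by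
        have : u = u' + p := by rw [hu']; abel
        rw [this, inner_add_right, hpu', add_zero]
      simp [hf, this]
  have hdetG : G.det = (Matrix.of fun i j => (inner ℝ (v i) (v j) : ℝ)).det * (inner ℝ u' u' : ℝ) := by
    rw [← hdet1, hblock, Matrix.det_fromBlocks_zero₂₁]
    congr 1
    rw [Matrix.det_unique]
    rfl
  show Real.sqrt G.det = _
  rw [hdetG, Real.sqrt_mul (gramDet_nonneg v)]
  congr 1
  rw [real_inner_self_eq_norm_sq, Real.sqrt_sq (norm_nonneg _)]

lemma vol_one {n : ℕ} (x : Fin n → Fin n → ℤ)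
    (hbasis : ∀ y : Fin n → ℤ, ∃ c : Fin n → ℤ, ∀ i, y i = ∑ j, c j * x j i) :
    gramVol (fun i : Fin n => toE (x i)) = 1 := by
  classical
  set X : Matrix (Fin n) (Fin n) ℤ := Matrix.of fun i j => x i j with hX
  have hC : ∀ m : Fin n, ∃ c : Fin n → ℤ, ∀ i, (if i = m then 1 else 0 : ℤ) = ∑ j, c j * x j i :=
    fun m => hbasis fun i => if i = m then 1 else 0
  choose C hCspec using hC
  have hCX : (Matrix.of fun m j => C m j) * X = 1 := by
    ext m i
    rw [Matrix.mul_apply]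
    have := (hCspec m i).symm
    simp only [hX, Matrix.of_apply]
    rw [this, Matrix.one_apply]
    by_cases h : m = i <;> simp [h, eq_comm]
  have hunit : IsUnit X.det := by
    apply IsUnit.of_mul_eq_one (Matrix.of fun m j => C m j).det
    rw [mul_comm, ← Matrix.det_mul, hCX, Matrix.det_one]
  have hdet : X.det = 1 ∨ X.det = -1 := Int.isUnit_iff.mp hunit
  have hmap : (Matrix.of fun i m => (toE (x i)) m) = X.map (Int.cast : ℤ → ℝ) := rfl
  have hgram : (Matrix.of fun i j => (inner ℝ (toE (x i)) (toE (x j)) : ℝ)).det = (X.det : ℝ)^2 := by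
    rw [gram_eq_mul, Matrix.det_mul, hmap]
    rw [Matrix.det_conjTranspose]
    have : (X.map (Int.cast : ℤ → ℝ)).det = ((X.det : ℤ) : ℝ) := ((Int.castRingHom ℝ).map_det X).symm
    rw [this, star_trivial]
    ring
  unfold gramVol
  rw [hgram]
  rcases hdet with h | h <;> rw [h] <;> norm_num

end Aux

set_option maxHeartbeats 800000 in
theorem stmt15 {n : ℕ} (x : Fin n → Fin n → ℤ)
    (hbasis : ∀ y : Fin n → ℤ, ∃ c : Fin n → ℤ, ∀ i, y i = ∑ j, c j * x j i)
    (k l : Fin n) (hkl : k < l) :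
    subDist (Submodule.span ℝ ((fun i => toE (x i)) '' {i : Fin n | i ≠ l}))
        (Submodule.span ℝ ((fun i => toE (x i)) '' {i : Fin n | i ≠ k})) =
      gramVol (fun i : {i : Fin n // i ≠ k ∧ i ≠ l} => toE (x i)) /
        (gramVol (fun i : {i : Fin n // i ≠ k} => toE (x i)) *
         gramVol (fun i : {i : Fin n // i ≠ l} => toE (x i))) := by
  classical
  have hkl' : k ≠ l := ne_of_lt hkl
  set f : Fin n → EuclideanSpace ℝ (Fin n) := fun i => toE (x i) with hf
  set U1 := Submodule.span ℝ (f '' {i : Fin n | i ≠ l}) with hU1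
  set U2 := Submodule.span ℝ (f '' {i : Fin n | i ≠ k}) with hU2
  set W := Submodule.span ℝ (f '' {i : Fin n | i ≠ k ∧ i ≠ l}) with hW
  set vk : {i : Fin n // i ≠ k} → EuclideanSpace ℝ (Fin n) := fun i => f i.1 with hvk
  set vl : {i : Fin n // i ≠ l} → EuclideanSpace ℝ (Fin n) := fun i => f i.1 with hvl
  set vkl : {i : Fin n // i ≠ k ∧ i ≠ l} → EuclideanSpace ℝ (Fin n) := fun i => f i.1 with hvkl
  set Vk := gramVol vk with hVk
  set Vl := gramVol vl with hVl
  set Vkl := gramVol vkl with hVkl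
  -- span identities
  have hrange_k : Set.range vk = f '' {i : Fin n | i ≠ k} := by
    ext y
    constructor
    · rintro ⟨i, rfl⟩; exact ⟨i.1, i.2, rfl⟩
    · rintro ⟨i, hi, rfl⟩; exact ⟨⟨i, hi⟩, rfl⟩
  have hrange_l : Set.range vl = f '' {i : Fin n | i ≠ l} := by
    ext y
    constructor
    · rintro ⟨i, rfl⟩; exact ⟨i.1, i.2, rfl⟩
    · rintro ⟨i, hi, rfl⟩; exact ⟨⟨i, hi⟩, rfl⟩
  have hrange_kl : Set.range vkl = f '' {i : Fin n | i ≠ k ∧ i ≠ l} := by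
    ext y
    constructor
    · rintro ⟨i, rfl⟩; exact ⟨i.1, i.2, rfl⟩
    · rintro ⟨i, hi, rfl⟩; exact ⟨⟨i, hi⟩, rfl⟩
  have hspan_k : Submodule.span ℝ (Set.range vk) = U2 := by rw [hrange_k, hU2]
  have hspan_l : Submodule.span ℝ (Set.range vl) = U1 := by rw [hrange_l, hU1]
  have hspan_kl : Submodule.span ℝ (Set.range vkl) = W := by rw [hrange_kl, hW]
  -- equivs
  have hk_ne : ∀ j : {i : Fin n // i ≠ k ∧ i ≠ l}, (j : Fin n) ≠ k := fun j => j.2.1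
  let g1 : ({i : Fin n // i ≠ k ∧ i ≠ l} ⊕ Unit) → {i : Fin n // i ≠ l} :=
    Sum.elim (fun j => ⟨j.1, j.2.2⟩) fun _ => ⟨k, hkl'⟩
  have hg1 : Function.Bijective g1 := by
    constructor
    · rintro (a | a) (b | b) h
      · simp only [g1, Sum.elim_inl, Subtype.mk.injEq] at h
        exact congrArg Sum.inl (Subtype.ext h)
      · simp only [g1, Sum.elim_inl, Sum.elim_inr, Subtype.mk.injEq] at h
        exact absurd h a.2.1
      · simp only [g1, Sum.elim_inl, Sum.elim_inr, Subtype.mk.injEq] at h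
        exact absurd h.symm b.2.1
      · rfl
    · rintro ⟨j, hj⟩
      by_cases h : j = k
      · exact ⟨Sum.inr (), by simp [g1, h]⟩
      · exact ⟨Sum.inl ⟨j, ⟨h, hj⟩⟩, rfl⟩
  let e1 : ({i : Fin n // i ≠ k ∧ i ≠ l} ⊕ Unit) ≃ {i : Fin n // i ≠ l} := Equiv.ofBijective g1 hg1
  let g2 : ({i : Fin n // i ≠ k} ⊕ Unit) → Fin n := Sum.elim (fun j => j.1) fun _ => k
  have hg2 : Function.Bijective g2 := by
    constructor
    · rintro (a | a) (b | b) h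
      · exact congrArg Sum.inl (Subtype.ext h)
      · exact absurd h a.2
      · exact absurd h.symm b.2
      · rfl
    · intro j
      by_cases h : j = k
      · exact ⟨Sum.inr (), h.symm⟩
      · exact ⟨Sum.inl ⟨j, h⟩, rfl⟩
  let e2 : ({i : Fin n // i ≠ k} ⊕ Unit) ≃ Fin n := Equiv.ofBijective g2 hg2
  let g3 : ({i : Fin n // i ≠ l} ⊕ Unit) → Fin n := Sum.elim (fun j => j.1) fun _ => l
  have hg3 : Function.Bijective g3 := by
    constructor
    · rintro (a | a) (b | b) h
      · exact congrArg Sum.inl (Subtype.ext h)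
      · exact absurd h a.2
      · exact absurd h.symm b.2
      · rfl
    · intro j
      by_cases h : j = l
      · exact ⟨Sum.inr (), h.symm⟩
      · exact ⟨Sum.inl ⟨j, h⟩, rfl⟩
  let e3 : ({i : Fin n // i ≠ l} ⊕ Unit) ≃ Fin n := Equiv.ofBijective g3 hg3
  -- key volume identities
  have hone : gramVol (fun i : Fin n => f i) = 1 := vol_one x hbasis
  have hcomp2 : (fun i : Fin n => f i) ∘ e2 = Sum.elim vk fun _ : Unit => f k := by
    funext q; rcases q with q | q <;> rfl
  have hcomp3 : (fun i : Fin n => f i) ∘ e3 = Sum.elim vl fun _ : Unit => f l := by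
    funext q; rcases q with q | q <;> rfl
  have hcomp1 : vl ∘ e1 = Sum.elim vkl fun _ : Unit => f k := by
    funext q; rcases q with q | q <;> rfl
  set dk : ℝ := ‖f k - (Submodule.orthogonalProjectionOnto U2 (f k) : EuclideanSpace ℝ (Fin n))‖ with hdk
  set dl : ℝ := ‖f l - (Submodule.orthogonalProjectionOnto U1 (f l) : EuclideanSpace ℝ (Fin n))‖ with hdl
  set a : EuclideanSpace ℝ (Fin n) :=
    f k - (Submodule.orthogonalProjectionOnto W (f k) : EuclideanSpace ℝ (Fin n)) with ha
  have hid_k : Vk * dk = 1 := by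
    have h := gramVol_extend vk (f k)
    rw [hspan_k] at h
    rw [← h, ← hcomp2, gramVol_reindex, hone]
  have hid_l : Vl * dl = 1 := by
    have h := gramVol_extend vl (f l)
    rw [hspan_l] at h
    rw [← h, ← hcomp3, gramVol_reindex, hone]
  have hid_a : Vl = Vkl * ‖a‖ := by
    have h := gramVol_extend vkl (f k)
    rw [hspan_kl] at h
    rw [← hcomp1, gramVol_reindex] at h
    exact h
  -- positivity
  have hVk_ne : Vk ≠ 0 := by
    intro h0
    rw [h0, zero_mul] at hid_k
    exact zero_ne_one hid_k
  have hVk_pos : 0 < Vk := lt_of_le_of_ne (gramVol_nonneg vk) (Ne.symm hVk_ne)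
  have hVl_ne : Vl ≠ 0 := by
    intro h0
    rw [h0, zero_mul] at hid_l
    exact zero_ne_one hid_l
  have hVl_pos : 0 < Vl := lt_of_le_of_ne (gramVol_nonneg vl) (Ne.symm hVl_ne)
  have hVkl_ne : Vkl ≠ 0 := by
    intro h0
    rw [h0, zero_mul] at hid_a
    exact hVl_ne hid_a
  have hVkl_pos : 0 < Vkl := lt_of_le_of_ne (gramVol_nonneg vkl) (Ne.symm hVkl_ne)
  have ha_pos : 0 < ‖a‖ := by
    by_contra h
    push_neg at h
    have : ‖a‖ = 0 := le_antisymm h (norm_nonneg _)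
    rw [this, mul_zero] at hid_a
    exact hVl_pos.ne' hid_a
  have ha0 : a ≠ 0 := by intro h; rw [h, norm_zero] at ha_pos; exact lt_irrefl 0 ha_pos
  -- W ≤ U1, W ≤ U2
  have hWU2 : W ≤ U2 := by
    rw [hW, hU2]
    exact Submodule.span_mono (Set.image_mono (f := f) fun i hi => hi.1)
  have hWU1 : W ≤ U1 := by
    rw [hW, hU1]
    exact Submodule.span_mono (Set.image_mono (f := f) fun i hi => hi.2)
  have hfkU1 : f k ∈ U1 := by
    rw [hU1]
    exact Submodule.subset_span ⟨k, hkl', rfl⟩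
  set p : EuclideanSpace ℝ (Fin n) := (Submodule.orthogonalProjectionOnto W (f k) : EuclideanSpace ℝ (Fin n))
    with hp
  have hpW : p ∈ W := (Submodule.orthogonalProjectionOnto W (f k)).2
  have haU1 : a ∈ U1 := by
    rw [ha]
    exact Submodule.sub_mem _ hfkU1 (hWU1 hpW)
  -- norm of projection of a onto U2ᗮ
  have hPa : ‖(Submodule.orthogonalProjectionOnto U2ᗮ a : EuclideanSpace ℝ (Fin n))‖ = dk := by
    rw [Submodule.orthogonalProjectionOnto_orthogonal, hdk]
    congr 1
    show a - (Submodule.orthogonalProjectionOnto U2 a : EuclideanSpace ℝ (Fin n)) = _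
    have hmap : (Submodule.orthogonalProjectionOnto U2 a : EuclideanSpace ℝ (Fin n)) =
        (Submodule.orthogonalProjectionOnto U2 (f k) : EuclideanSpace ℝ (Fin n)) - p := by
      rw [ha, map_sub]
      have : (Submodule.orthogonalProjectionOnto U2 p : EuclideanSpace ℝ (Fin n)) = p :=
        Submodule.starProjection_eq_self_iff.mpr (hWU2 hpW)
      rw [Submodule.coe_sub, this]
    rw [hmap, ha]
    abel
  -- a orthogonal to W
  have haW : ∀ w ∈ W, (inner ℝ a w : ℝ) = 0 := by
    intro w hw
    have : a ∈ Wᗮ := Submodule.sub_starProjection_mem_orthogonal (K := W) (f k)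
    exact (Submodule.mem_orthogonal' W a).mp this w hw
  -- the candidate maximum
  set c : ℝ := distToSub a U2 with hc
  have hc_val : c = dk / ‖a‖ := by
    rw [hc]; unfold distToSub; rw [hPa]
  -- image set decomposition
  have hsets : {i : Fin n | i ≠ l} = insert k {i : Fin n | i ≠ k ∧ i ≠ l} := by
    ext i
    constructor
    · intro hi
      by_cases h : i = k
      · exact Set.mem_insert_iff.mpr (Or.inl h)
      · exact Set.mem_insert_iff.mpr (Or.inr ⟨h, hi⟩)
    · intro hi
      rcases Set.mem_insert_iff.mp hi with rfl | h
      · exact hkl'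
      · exact h.2
  have himg : f '' {i : Fin n | i ≠ l} = insert (f k) (f '' {i : Fin n | i ≠ k ∧ i ≠ l}) := by
    rw [hsets, Set.image_insert_eq]
  -- upper bound argument
  have hub : ∀ d ∈ {d : ℝ | ∃ y ∈ U1, y ≠ 0 ∧ d = distToSub y U2}, d ≤ c := by
    rintro d ⟨y, hyU1, hy0, rfl⟩
    rw [hU1, himg] at hyU1
    obtain ⟨t, z, hz, rfl⟩ := Submodule.mem_span_insert.mp hyU1
    have hzW : z ∈ W := by rw [hW]; exact hz
    set w' : EuclideanSpace ℝ (Fin n) := t • p + z with hw'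
    have hw'W : w' ∈ W := Submodule.add_mem _ (Submodule.smul_mem _ _ hpW) hzW
    have hdecomp : t • f k + z = t • a + w' := by
      rw [ha, hw', smul_sub]
      abel
    have hProj : (Submodule.orthogonalProjectionOnto U2ᗮ (t • f k + z) : EuclideanSpace ℝ (Fin n)) =
        t • (Submodule.orthogonalProjectionOnto U2ᗮ a : EuclideanSpace ℝ (Fin n)) := by
      rw [hdecomp, map_add, map_smul]
      have : Submodule.orthogonalProjectionOnto U2ᗮ w' = 0 :=
        Submodule.orthogonalProjectionOnto_apply_of_mem_orthogonal (U2.le_orthogonal_orthogonal (hWU2 hw'W))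
      rw [this]
      push_cast
      simp
    have hinner : (inner ℝ (t • a) w' : ℝ) = 0 := by
      rw [real_inner_smul_left, haW w' hw'W, mul_zero]
    have hnormsq : ‖t • f k + z‖^2 = ‖t • a‖^2 + ‖w'‖^2 := by
      rw [hdecomp, norm_add_sq_real, hinner]
      ring
    have hge : ‖t • a‖ ≤ ‖t • f k + z‖ := by
      have h1 : ‖t • a‖^2 ≤ ‖t • f k + z‖^2 := by
        rw [hnormsq]; nlinarith [sq_nonneg ‖w'‖]
      calc ‖t • a‖ = Real.sqrt (‖t • a‖^2) := (Real.sqrt_sq (norm_nonneg _)).symm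
        _ ≤ Real.sqrt (‖t • f k + z‖^2) := Real.sqrt_le_sqrt h1
        _ = ‖t • f k + z‖ := Real.sqrt_sq (norm_nonneg _)
    unfold distToSub
    rw [hProj, norm_smul, Real.norm_eq_abs]
    by_cases ht : t = 0
    · have hcnn : (0:ℝ) ≤ c := by rw [hc_val]; positivity
      simp only [ht, abs_zero, zero_mul, zero_div]
      exact hcnn
    · have habs : 0 < |t| := abs_pos.mpr ht
      have hta : 0 < ‖t • a‖ := by
        rw [norm_smul, Real.norm_eq_abs]; exact mul_pos habs ha_pos
      have hxpos : 0 < ‖t • f k + z‖ := lt_of_lt_of_le hta hge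
      have step1 : |t| * ‖(Submodule.orthogonalProjectionOnto U2ᗮ a : EuclideanSpace ℝ (Fin n))‖ / ‖t • f k + z‖
          ≤ |t| * ‖(Submodule.orthogonalProjectionOnto U2ᗮ a : EuclideanSpace ℝ (Fin n))‖ / (|t| * ‖a‖) := by
        refine div_le_div_of_nonneg_left (by positivity) ?_ ?_
        · rw [norm_smul, Real.norm_eq_abs] at hta; exact hta
        · rw [norm_smul, Real.norm_eq_abs] at hge; exact hge
      have step2 : |t| * ‖(Submodule.orthogonalProjectionOnto U2ᗮ a : EuclideanSpace ℝ (Fin n))‖ / (|t| * ‖a‖)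
          = c := by
        rw [mul_div_mul_left _ _ (ne_of_gt habs)]
        rw [hc]; rfl
      exact le_trans step1 (le_of_eq step2)
  have hmem : c ∈ {d : ℝ | ∃ y ∈ U1, y ≠ 0 ∧ d = distToSub y U2} := ⟨a, haU1, ha0, rfl⟩
  have hgreat : IsGreatest {d : ℝ | ∃ y ∈ U1, y ≠ 0 ∧ d = distToSub y U2} c := ⟨hmem, hub⟩
  have hsup : subDist U1 U2 = c := by
    unfold subDist
    exact hgreat.csSup_eq
  rw [hsup, hc_val]
  -- final arithmetic
  have hdk_eq : dk = 1 / Vk := by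
    field_simp
    linarith [hid_k]
  have hna : ‖a‖ = Vl / Vkl := by
    rw [hid_a]
    field_simp
  rw [hdk_eq, hna]
  field_simp
end

section
/- Let n = m+2 with m ≥ 1, let Y > 0 be a real number, and let (w_1,…,w_m,u,d) be an orthonormal basis of R^n. Then the set of x ∈ R^n satisfying |x·w_j| ≤ n^{−1/2}Y for j = 1,…,m, |x·u| ≤ εY^{−ρ}, and |x·d| ≤ n^{m/2}ε^{−1}Y^{ρ−m} is a compact symmetric convex body of volume 2^n, and hence contains a nonzero point of Z^n. -/
open scoped BigOperators

theorem stmt18 {m : ℕ} (hm : 1 ≤ m) {n : ℕ} (hn : n = m + 2)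
    (b : OrthonormalBasis (Fin n) ℝ (EuclideanSpace ℝ (Fin n)))
    (Y ε ρ : ℝ) (hY : 0 < Y) (hε : 0 < ε)
    (S : Set (EuclideanSpace ℝ (Fin n)))
    (hS : S = {x : EuclideanSpace ℝ (Fin n) |
      (∀ j : Fin n, (j : ℕ) < m → |(inner ℝ x (b j) : ℝ)| ≤ (n : ℝ) ^ (-(1 : ℝ) / 2) * Y) ∧
      |(inner ℝ x (b ⟨m, by omega⟩) : ℝ)| ≤ ε * Y ^ (-ρ) ∧
      |(inner ℝ x (b ⟨m + 1, by omega⟩) : ℝ)| ≤ (n : ℝ) ^ ((m : ℝ) / 2) * ε⁻¹ * Y ^ (ρ - m)}) :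
    IsCompact S ∧ Convex ℝ S ∧ (∀ x ∈ S, -x ∈ S) ∧
      MeasureTheory.volume S = 2 ^ n ∧
      ∃ x : Fin n → ℤ, x ≠ 0 ∧ toE x ∈ S := by
  classical
  subst hn
  have hnpos : (0:ℝ) < ((m+2 : ℕ) : ℝ) := by positivity
  set c : Fin (m+2) → ℝ := fun i =>
    if (i : ℕ) < m then ((m+2 : ℕ) : ℝ) ^ (-(1 : ℝ) / 2) * Y
    else if (i : ℕ) = m then ε * Y ^ (-ρ)
    else ((m+2 : ℕ) : ℝ) ^ ((m : ℝ) / 2) * ε⁻¹ * Y ^ (ρ - m) with hc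
  have hcpos : ∀ i, 0 < c i := by
    intro i
    rw [hc]
    dsimp only
    split_ifs
    · positivity
    · positivity
    · positivity
  -- membership characterization
  have hmem : ∀ x : EuclideanSpace ℝ (Fin (m+2)), x ∈ S ↔ ∀ i, |(inner ℝ x (b i) : ℝ)| ≤ c i := by
    intro x
    rw [hS]
    constructor
    · rintro ⟨h1, h2, h3⟩ i
      rw [hc]; dsimp only
      split_ifs with hi1 hi2
      · exact h1 i hi1
      · have : i = ⟨m, by omega⟩ := Fin.ext hi2
        rw [this]; exact h2
      · have : i = ⟨m + 1, by omega⟩ := Fin.ext (show (i:ℕ) = m+1 by have := i.isLt; omega)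
        rw [this]; exact h3
    · intro h
      refine ⟨fun j hj => ?_, ?_, ?_⟩
      · have := h j; rw [hc] at this; simpa [hj] using this
      · have := h ⟨m, by omega⟩; rw [hc] at this; simpa using this
      · have := h ⟨m + 1, by omega⟩; rw [hc] at this
        simpa [Nat.succ_ne_self, show ¬ (m+1 < m) by omega, show m+1 ≠ m by omega] using this
  -- the box in coordinates
  set B : Set (EuclideanSpace ℝ (Fin (m+2))) :=
    ⇑(MeasurableEquiv.toLp 2 (Fin (m+2) → ℝ)).symm ⁻¹'
      (Set.univ.pi fun i => Set.Icc (-(c i)) (c i) : Set (Fin (m+2) → ℝ)) with hB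
  have hSB : S = ⇑b.repr ⁻¹' B := by
    ext x
    rw [hmem x]
    simp only [hB, Set.mem_preimage, Set.mem_univ_pi, Set.mem_Icc]
    refine forall_congr' fun i => ?_
    show _ ↔ -c i ≤ b.repr x i ∧ b.repr x i ≤ c i
    rw [b.repr_apply_apply, real_inner_comm, abs_le]
  have hBpi : B = ⇑(MeasurableEquiv.toLp 2 (Fin (m+2) → ℝ)).symm ⁻¹'
      (Set.univ.pi fun i => Set.Icc (-(c i)) (c i)) := rfl
  have hBcpt : IsCompact B := by
    have : B = ⇑(EuclideanSpace.equiv (Fin (m+2)) ℝ).toHomeomorph ⁻¹'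
        (Set.univ.pi fun i => Set.Icc (-(c i)) (c i)) := rfl
    rw [this, Homeomorph.isCompact_preimage]
    exact isCompact_univ_pi fun i => isCompact_Icc
  have hcpt : IsCompact S := by
    rw [hSB, show ⇑b.repr = ⇑b.repr.toHomeomorph from rfl, Homeomorph.isCompact_preimage]
    exact hBcpt
  have hconv : Convex ℝ S := by
    rw [hSB]
    exact ((convex_pi fun i _ => convex_Icc (-(c i)) (c i)).linear_preimage
      (WithLp.linearEquiv 2 ℝ (Fin (m+2) → ℝ)).toLinearMap).linear_preimage
      (b.repr.toLinearEquiv.toLinearMap)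
  have hsymm : ∀ x ∈ S, -x ∈ S := by
    intro x hx
    rw [hmem] at hx ⊢
    intro i
    rw [inner_neg_left, abs_neg]
    exact hx i
  have hBvol : MeasureTheory.volume B = 2 ^ (m+2) := by
    rw [hBpi, (EuclideanSpace.volume_preserving_symm_measurableEquiv_toLp _).measure_preimage
      ((MeasurableSet.univ_pi fun i => measurableSet_Icc).nullMeasurableSet)]
    rw [MeasureTheory.volume_pi, MeasureTheory.Measure.pi_pi]
    simp only [Real.volume_Icc, sub_neg_eq_add, ← two_mul]
    rw [← ENNReal.ofReal_prod_of_nonneg (fun i _ => by positivity)]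
    have hprod : ∏ i : Fin (m+2), 2 * c i = 2 ^ (m+2) := by
      rw [Finset.prod_mul_distrib, Finset.prod_const, Finset.card_univ, Fintype.card_fin]
      have hcprod : ∏ i : Fin (m+2), c i = 1 := by
        rw [Fin.prod_univ_castSucc, Fin.prod_univ_castSucc]
        have h1 : ∀ i : Fin m, c (i.castSucc.castSucc) = ((m+2 : ℕ) : ℝ) ^ (-(1 : ℝ) / 2) * Y := by
          intro i
          rw [hc]
          simp [i.isLt]
        have h2 : c ((Fin.last m).castSucc) = ε * Y ^ (-ρ) := by
          rw [hc]; simp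
        have h3 : c (Fin.last (m+1)) = ((m+2 : ℕ) : ℝ) ^ ((m : ℝ) / 2) * ε⁻¹ * Y ^ (ρ - m) := by
          rw [hc]
          simp [Fin.last, show ¬ (m+1 < m) by omega, show m+1 ≠ m by omega]
        rw [h2, h3, Finset.prod_congr rfl fun i _ => h1 i, Finset.prod_const, Finset.card_univ,
          Fintype.card_fin]
        rw [mul_pow, ← Real.rpow_natCast (((m+2 : ℕ) : ℝ) ^ (-(1 : ℝ) / 2)) m,
          ← Real.rpow_mul hnpos.le, ← Real.rpow_natCast Y m]
        have e1 : ((m+2 : ℕ) : ℝ) ^ (-(1:ℝ)/2 * ((m:ℕ):ℝ)) * ((m+2 : ℕ) : ℝ) ^ ((m:ℝ)/2) = 1 := by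
          rw [← Real.rpow_add hnpos, show -(1:ℝ)/2 * ((m:ℕ):ℝ) + (m:ℝ)/2 = 0 by push_cast; ring,
            Real.rpow_zero]
        have e2 : Y ^ (((m:ℕ)):ℝ) * Y ^ (-ρ) * Y ^ (ρ - (m:ℝ)) = 1 := by
          rw [← Real.rpow_add hY, ← Real.rpow_add hY,
            show ((m:ℕ):ℝ) + -ρ + (ρ - (m:ℝ)) = 0 by push_cast; ring, Real.rpow_zero]
        calc ((m+2 : ℕ) : ℝ) ^ (-(1:ℝ)/2 * ((m:ℕ):ℝ)) * Y ^ (((m:ℕ)):ℝ) * (ε * Y ^ (-ρ)) *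
              (((m+2 : ℕ) : ℝ) ^ ((m : ℝ) / 2) * ε⁻¹ * Y ^ (ρ - (m:ℝ)))
            = (((m+2 : ℕ) : ℝ) ^ (-(1:ℝ)/2 * ((m:ℕ):ℝ)) * ((m+2 : ℕ) : ℝ) ^ ((m:ℝ)/2)) *
              (Y ^ (((m:ℕ)):ℝ) * Y ^ (-ρ) * Y ^ (ρ - (m:ℝ))) * (ε * ε⁻¹) := by ring
          _ = 1 := by rw [e1, e2, mul_inv_cancel₀ hε.ne']; norm_num
      rw [hcprod, mul_one]
    rw [hprod]
    rw [ENNReal.ofReal_pow (by norm_num)]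
    norm_num
  have hvol : MeasureTheory.volume S = 2 ^ (m+2) := by
    rw [hSB, b.measurePreserving_repr.measure_preimage
      (hBcpt.isClosed.measurableSet.nullMeasurableSet)]
    exact hBvol
  refine ⟨hcpt, hconv, hsymm, hvol, ?_⟩
  set e := EuclideanSpace.basisFun (Fin (m+2)) ℝ with he
  have hfd : MeasureTheory.volume (ZSpan.fundamentalDomain e.toBasis) = 1 := by
    have hfdeq : ZSpan.fundamentalDomain e.toBasis =
        ⇑(MeasurableEquiv.toLp 2 (Fin (m+2) → ℝ)).symm ⁻¹'
          (Set.univ.pi fun _ => Set.Ico (0:ℝ) 1) := by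
      ext x
      simp only [ZSpan.mem_fundamentalDomain, Set.mem_preimage, Set.mem_univ_pi]
      refine forall_congr' fun i => ?_
      rw [OrthonormalBasis.coe_toBasis_repr_apply, EuclideanSpace.basisFun_repr]
      rfl
    rw [hfdeq, (EuclideanSpace.volume_preserving_symm_measurableEquiv_toLp _).measure_preimage
      ((MeasurableSet.univ_pi fun i => measurableSet_Ico).nullMeasurableSet)]
    rw [MeasureTheory.volume_pi, MeasureTheory.Measure.pi_pi]
    simp [Real.volume_Ico]
  have fund := ZSpan.isAddFundamentalDomain e.toBasis MeasureTheory.volume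
  haveI : DiscreteTopology
      (Submodule.span ℤ (Set.range ⇑e.toBasis)).toAddSubgroup := inferInstance
  haveI : Countable
      (Submodule.span ℤ (Set.range ⇑e.toBasis)).toAddSubgroup :=
    inferInstanceAs <| Countable (Submodule.span ℤ (Set.range ⇑e.toBasis))
  obtain ⟨x, hx0, hxS⟩ :=
    MeasureTheory.exists_ne_zero_mem_lattice_of_measure_mul_two_pow_le_measure
      (L := (Submodule.span ℤ (Set.range ⇑e.toBasis)).toAddSubgroup)
      fund hsymm hconv hcpt
      (le_of_eq (by rw [hfd, one_mul, hvol, finrank_euclideanSpace_fin]))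
  have hint : ∀ i, ∃ kk : ℤ, ((kk : ℝ)) =
      e.toBasis.repr (x : EuclideanSpace ℝ (Fin (m+2))) i := by
    intro i
    obtain ⟨kk, hkk⟩ := (e.toBasis.mem_span_iff_repr_mem ℤ _).mp x.2 i
    exact ⟨kk, hkk⟩
  choose k hk using hint
  have htoE : toE k = (x : EuclideanSpace ℝ (Fin (m+2))) := by
    ext i
    have := hk i
    rw [OrthonormalBasis.coe_toBasis_repr_apply, EuclideanSpace.basisFun_repr] at this
    exact this
  refine ⟨k, fun h0 => hx0 (Subtype.ext ?_), htoE ▸ hxS⟩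
  rw [← htoE, h0]
  ext i
  simp [toE]
end
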